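/- arXiv:2505.14908 — 2 statements merged into one kernel-verified Lean document; each statement's English description precedes it below -/
import Mathlib

section
/- Fix a tree T with bipartition {A,B}, |A| = l+1 ≤ |B|, and δ = min degree over A, with δ ≥ 2. For n sufficiently large, spex(n,T) ≥ f(δ−2, n), where f(d,n) = ( l+d−1 + √((l+d−1)² + 4(nl + d − ld − l²)) ) / 2. Concretely: if H₂ is a graph on n−l vertices with maximum degree at most δ−1 such that at most one vertex has degree δ−1 (e.g., an almost-(δ−2)-regular graph), then K_l ∨ H₂ is T-free and λ(K_l ∨ H₂) ≥ f(δ−2, n). -/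
open scoped Classical

/-- The adjacency spectral radius (largest adjacency eigenvalue) of a finite simple graph. -/
noncomputable def specRad {V : Type*} [Fintype V] (G : SimpleGraph V) : ℝ :=
  sSup {μ : ℝ | Module.End.HasEigenvalue (Matrix.toLin' (G.adjMatrix ℝ)) μ}

/-- `G` contains a copy of `T` (a subgraph isomorphic to `T`). -/
def ContainsCopy {V W : Type*} (T : SimpleGraph V) (G : SimpleGraph W) : Prop :=
  ∃ f : V → W, Function.Injective f ∧ ∀ ⦃a b⦄, T.Adj a b → G.Adj (f a) (f b)

/-- The spectral extremal number: the supremum of spectral radii of `T`-free graphs on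
`n` vertices. -/
noncomputable def spex (n : ℕ) {W : Type*} (T : SimpleGraph W) : ℝ :=
  sSup {r : ℝ | ∃ G : SimpleGraph (Fin n), ¬ ContainsCopy T G ∧ specRad G = r}

/-- The join `G ∨ H` of two graphs. -/
def graphJoin {α β : Type*} (G : SimpleGraph α) (H : SimpleGraph β) : SimpleGraph (α ⊕ β) where
  Adj x y :=
    match x, y with
    | Sum.inl a, Sum.inl b => G.Adj a b
    | Sum.inr a, Sum.inr b => H.Adj a b
    | Sum.inl _, Sum.inr _ => True
    | Sum.inr _, Sum.inl _ => True
  symm := by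
    constructor
    rintro (a|a) (b|b) h
    · exact G.adj_symm h
    · trivial
    · trivial
    · exact H.adj_symm h
  loopless := by
    constructor
    rintro (a|a) h
    · exact G.irrefl h
    · exact H.irrefl h

/-- `f(d,n) = ( l+d−1 + √((l+d−1)² + 4(nl + d − ld − l²)) ) / 2`. -/
noncomputable def fdn (l d n : ℝ) : ℝ :=
  (l + d - 1 + Real.sqrt ((l + d - 1) ^ 2 + 4 * (n * l + d - l * d - l ^ 2))) / 2



lemma eigen_le_card {ι : Type*} [Fintype ι] (G : SimpleGraph ι) {μ : ℝ}
    (h : Module.End.HasEigenvalue (Matrix.toLin' (G.adjMatrix ℝ)) μ) :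
    μ ≤ Fintype.card ι := by
  obtain ⟨v, hv0, hvne⟩ := h.exists_hasEigenvector
  rw [Module.End.mem_eigenspace_iff] at hv0
  have hmv : (G.adjMatrix ℝ).mulVec v = μ • v := by
    rw [← Matrix.toLin'_apply]; exact hv0
  -- pick coordinate with max abs
  have hne : (Finset.univ : Finset ι).Nonempty := by
    by_contra hcon
    rw [Finset.not_nonempty_iff_eq_empty] at hcon
    exact hvne (funext fun i => absurd (Finset.mem_univ i) (by simp [hcon]))
  obtain ⟨i, -, hi⟩ := Finset.exists_max_image Finset.univ (fun j => |v j|) hne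
  have hvi : v i ≠ 0 := by
    intro h0
    apply hvne; ext j
    have hj := hi j (Finset.mem_univ j)
    rw [h0, abs_zero] at hj
    exact abs_nonpos_iff.mp hj
  have key : |μ| * |v i| ≤ (Fintype.card ι : ℝ) * |v i| := by
    have h1 : |μ * v i| = |((G.adjMatrix ℝ).mulVec v) i| := by rw [hmv]; simp
    calc |μ| * |v i| = |μ * v i| := (abs_mul _ _).symm
      _ = |∑ j ∈ G.neighborFinset i, v j| := by rw [h1, SimpleGraph.adjMatrix_mulVec_apply]
      _ ≤ ∑ j ∈ G.neighborFinset i, |v j| := Finset.abs_sum_le_sum_abs _ _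
      _ ≤ ∑ _j ∈ G.neighborFinset i, |v i| := Finset.sum_le_sum (fun j _ => hi j (Finset.mem_univ j))
      _ = (G.neighborFinset i).card * |v i| := by rw [Finset.sum_const, nsmul_eq_mul]
      _ ≤ (Fintype.card ι : ℝ) * |v i| := by
          have : (G.neighborFinset i).card ≤ Fintype.card ι := Finset.card_le_card (Finset.subset_univ _) |>.trans_eq (Finset.card_univ)
          exact mul_le_mul_of_nonneg_right (by exact_mod_cast this) (abs_nonneg _)
  have habs : |μ| ≤ (Fintype.card ι : ℝ) :=
    le_of_mul_le_mul_right (by simpa [mul_comm] using key) (abs_pos.mpr hvi)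
  exact (le_abs_self μ).trans habs

lemma bddAbove_eigen {ι : Type*} [Fintype ι] (G : SimpleGraph ι) :
    BddAbove {μ : ℝ | Module.End.HasEigenvalue (Matrix.toLin' (G.adjMatrix ℝ)) μ} :=
  ⟨Fintype.card ι, fun μ hμ => eigen_le_card G hμ⟩

lemma specRad_le_card {ι : Type*} [Fintype ι] (G : SimpleGraph ι) :
    specRad G ≤ Fintype.card ι :=
  Real.sSup_le (fun μ hμ => eigen_le_card G hμ) (by positivity)

lemma le_specRad_of_eigen {ι : Type*} [Fintype ι] (G : SimpleGraph ι) {μ : ℝ}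
    (h : Module.End.HasEigenvalue (Matrix.toLin' (G.adjMatrix ℝ)) μ) :
    μ ≤ specRad G :=
  le_csSup (bddAbove_eigen G) h
lemma rayleigh_eigen {ι : Type*} [Fintype ι] (G : SimpleGraph ι)
    (x : EuclideanSpace ℝ ι) (hx : x ≠ 0) {μ : ℝ}
    (hq : μ * (∑ i, x i ^ 2) ≤ ∑ i, (∑ j, (G.adjMatrix ℝ) i j * x j) * x i) :
    ∃ ν : ℝ, Module.End.HasEigenvalue (Matrix.toLin' (G.adjMatrix ℝ)) ν ∧ μ ≤ ν := by
  set A := G.adjMatrix ℝ with hA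
  set Tl := Matrix.toEuclideanLin A with hTl
  have hherm : A.IsHermitian := by
    rw [Matrix.IsHermitian, Matrix.conjTranspose_eq_transpose_of_trivial]
    exact G.isSymm_adjMatrix
  have hsym : Tl.IsSymmetric := Matrix.isHermitian_iff_isSymmetric.mp hherm
  haveI : Nontrivial (EuclideanSpace ℝ ι) := ⟨⟨x, 0, hx⟩⟩
  set μs : ℝ := ⨆ y : {y : EuclideanSpace ℝ ι // y ≠ 0},
      RCLike.re (inner ℝ (Tl y) (y : EuclideanSpace ℝ ι) : ℝ) / ‖(y : EuclideanSpace ℝ ι)‖ ^ 2 with hμs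
  have hev : Module.End.HasEigenvalue Tl μs := hsym.hasEigenvalue_iSup_of_finiteDimensional
  -- transfer eigenvalue to toLin'
  obtain ⟨v, hv, hvne⟩ := hev.exists_hasEigenvector
  rw [Module.End.mem_eigenspace_iff] at hv
  have hev' : Module.End.HasEigenvalue (Matrix.toLin' A) μs := by
    apply Module.End.hasEigenvalue_of_hasEigenvector (x := (WithLp.equiv 2 (ι → ℝ)) v)
    constructor
    · rw [Module.End.mem_eigenspace_iff]
      have := congrArg (WithLp.equiv 2 (ι → ℝ)) hv
      rw [Matrix.toLin'_apply]
      exact this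
    · simpa using hvne
  refine ⟨μs, hev', ?_⟩
  -- μ ≤ rayleigh quotient at x ≤ μs
  set TC := LinearMap.toContinuousLinearMap Tl with hTC
  have hbdd : BddAbove (Set.range fun y : {y : EuclideanSpace ℝ ι // y ≠ 0} =>
      RCLike.re (inner ℝ (Tl y) (y : EuclideanSpace ℝ ι) : ℝ) / ‖(y : EuclideanSpace ℝ ι)‖ ^ 2) := by
    refine ⟨‖TC‖, ?_⟩
    rintro r ⟨y, rfl⟩
    have hy : (0:ℝ) < ‖(y : EuclideanSpace ℝ ι)‖ ^ 2 := by
      have := norm_pos_iff.mpr y.2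
      positivity
    rw [div_le_iff₀ hy]
    have h1 : (inner ℝ (Tl y) (y : EuclideanSpace ℝ ι) : ℝ) ≤ ‖Tl (y : EuclideanSpace ℝ ι)‖ * ‖(y : EuclideanSpace ℝ ι)‖ :=
      real_inner_le_norm _ _
    have h2 : ‖Tl (y : EuclideanSpace ℝ ι)‖ ≤ ‖TC‖ * ‖(y : EuclideanSpace ℝ ι)‖ := by
      have := TC.le_opNorm (y : EuclideanSpace ℝ ι)
      simpa [hTC] using this
    simp only [RCLike.re_to_real]
    nlinarith [norm_nonneg (y : EuclideanSpace ℝ ι)]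
  have hle : μ ≤ RCLike.re (inner ℝ (Tl x) (x : EuclideanSpace ℝ ι) : ℝ) / ‖x‖ ^ 2 := by
    have hnx : (0:ℝ) < ‖x‖ ^ 2 := by
      have := norm_pos_iff.mpr hx
      positivity
    rw [le_div_iff₀ hnx]
    have hinner : (inner ℝ (Tl x) (x : EuclideanSpace ℝ ι) : ℝ) = ∑ i, (∑ j, A i j * x j) * x i := by
      rw [PiLp.inner_apply]
      apply Finset.sum_congr rfl
      intro i _
      simp only [RCLike.inner_apply, conj_trivial]
      rw [mul_comm]; rfl
    have hnorm : ‖x‖ ^ 2 = ∑ i, x i ^ 2 := by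
      rw [← real_inner_self_eq_norm_sq, PiLp.inner_apply]
      apply Finset.sum_congr rfl
      intro i _
      simp [sq]
    rw [hinner, hnorm]
    simpa [RCLike.re_to_real, mul_comm] using hq
  exact hle.trans (le_ciSup hbdd ⟨x, hx⟩)
lemma join_eigen {l m : ℕ} (hm : 1 ≤ m) (H : SimpleGraph (Fin m))
    {d μ a b : ℝ}
    (hsum : d * m ≤ ∑ v, (H.degree v : ℝ))
    (heq1 : ((l : ℝ) - 1) * a + m * b = μ * a)
    (heq2 : (l : ℝ) * a + d * b = μ * b)
    (hx : 0 < l * a ^ 2 + m * b ^ 2) :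
    ∃ ν : ℝ, Module.End.HasEigenvalue
      (Matrix.toLin' (((graphJoin (⊤ : SimpleGraph (Fin l)) H)).adjMatrix ℝ)) ν ∧ μ ≤ ν := by
  set G' := graphJoin (⊤ : SimpleGraph (Fin l)) H with hG'
  set x : EuclideanSpace ℝ (Fin l ⊕ Fin m) := WithLp.toLp 2 (fun i => Sum.elim (fun _ => a) (fun _ => b) i) with hxdef
  have hxa : ∀ i : Fin l, x (Sum.inl i) = a := fun _ => rfl
  have hxb : ∀ j : Fin m, x (Sum.inr j) = b := fun _ => rfl
  have hj0 : (⟨0, hm⟩ : Fin m) = ⟨0, hm⟩ := rfl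
  apply rayleigh_eigen G' x
  · -- x ≠ 0
    intro h0
    rcases Nat.eq_zero_or_pos l with hl | hl
    · have hb : b = 0 := by simpa [hxb] using congrArg (fun y : EuclideanSpace ℝ (Fin l ⊕ Fin m) => y (Sum.inr ⟨0, hm⟩)) h0
      rw [hb, hl] at hx
      simp at hx
    · have ha : a = 0 := by simpa [hxa] using congrArg (fun y : EuclideanSpace ℝ (Fin l ⊕ Fin m) => y (Sum.inl ⟨0, hl⟩)) h0
      have hb : b = 0 := by simpa [hxb] using congrArg (fun y : EuclideanSpace ℝ (Fin l ⊕ Fin m) => y (Sum.inr ⟨0, hm⟩)) h0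
      rw [ha, hb] at hx
      simp at hx
  · -- the Rayleigh inequality
    have hLHS : (∑ i, x i ^ 2) = l * a ^ 2 + m * b ^ 2 := by
      rw [Fintype.sum_sum_type]
      simp only [hxa, hxb, Finset.sum_const, Finset.card_univ, Fintype.card_fin, nsmul_eq_mul]
    have hAll : ∀ i, (∑ j, (G'.adjMatrix ℝ) i j * x j)
        = Sum.elim (fun _ : Fin l => ((l:ℝ)-1) * a + m * b) (fun j : Fin m => (l:ℝ) * a + (H.degree j) * b) i := by
      rintro (i | i)
      · simp only [Sum.elim_inl]
        rw [Fintype.sum_sum_type]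
        have e1 : ∀ i' : Fin l, (G'.adjMatrix ℝ) (Sum.inl i) (Sum.inl i') * x (Sum.inl i')
            = (if i = i' then 0 else 1) * a := by
          intro i'
          rw [SimpleGraph.adjMatrix_apply, hxa]
          congr 1
          rcases eq_or_ne i i' with h | h
          · simp [hG', graphJoin, h]
          · have : G'.Adj (Sum.inl i) (Sum.inl i') := by
              show (⊤ : SimpleGraph (Fin l)).Adj i i'
              simpa using h
            simp [this, h]
        have e2 : ∀ j : Fin m, (G'.adjMatrix ℝ) (Sum.inl i) (Sum.inr j) * x (Sum.inr j) = b := by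
          intro j
          rw [SimpleGraph.adjMatrix_apply, hxb]
          have : G'.Adj (Sum.inl i) (Sum.inr j) := trivial
          simp [this]
        rw [Finset.sum_congr rfl (fun i' _ => e1 i'), Finset.sum_congr rfl (fun j _ => e2 j)]
        rw [Finset.sum_const, Finset.card_univ, Fintype.card_fin, nsmul_eq_mul]
        have : ∑ i' : Fin l, (if i = i' then (0:ℝ) else 1) * a = ((l:ℝ) - 1) * a := by
          rw [← Finset.sum_mul]
          congr 1
          have : ∑ i' : Fin l, (if i = i' then (0:ℝ) else 1)
              = ∑ i' : Fin l, (1 - if i = i' then (1:ℝ) else 0) := by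
            apply Finset.sum_congr rfl; intro i' _; split <;> ring
          rw [this, Finset.sum_sub_distrib, Finset.sum_ite_eq, if_pos (Finset.mem_univ i)]
          simp
        rw [this]
      · simp only [Sum.elim_inr]
        rw [Fintype.sum_sum_type]
        have e1 : ∀ i' : Fin l, (G'.adjMatrix ℝ) (Sum.inr i) (Sum.inl i') * x (Sum.inl i') = a := by
          intro i'
          rw [SimpleGraph.adjMatrix_apply, hxa]
          have : G'.Adj (Sum.inr i) (Sum.inl i') := trivial
          simp [this]
        have e2 : ∀ j : Fin m, (G'.adjMatrix ℝ) (Sum.inr i) (Sum.inr j) * x (Sum.inr j)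
            = (if H.Adj i j then (1:ℝ) else 0) * b := by
          intro j
          rw [SimpleGraph.adjMatrix_apply, hxb]
          congr 1
        rw [Finset.sum_congr rfl (fun i' _ => e1 i'), Finset.sum_congr rfl (fun j _ => e2 j)]
        rw [Finset.sum_const, Finset.card_univ, Fintype.card_fin, nsmul_eq_mul]
        congr 1
        rw [← Finset.sum_mul, Finset.sum_boole, ← SimpleGraph.neighborFinset_eq_filter]
        rfl
    have hRHS : (∑ i, (∑ j, (G'.adjMatrix ℝ) i j * x j) * x i)
        = (((l:ℝ)-1) * a + m * b) * a * l + ((l:ℝ) * a * b) * m + (∑ v, (H.degree v : ℝ)) * b * b := by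
      rw [Finset.sum_congr rfl (fun i _ => by rw [hAll i])]
      rw [Fintype.sum_sum_type]
      simp only [Sum.elim_inl, Sum.elim_inr, hxa, hxb]
      rw [Finset.sum_const, Finset.card_univ, Fintype.card_fin, nsmul_eq_mul]
      rw [← Finset.sum_mul, Finset.sum_add_distrib]
      rw [Finset.sum_const, Finset.card_univ, Fintype.card_fin, nsmul_eq_mul]
      rw [← Finset.sum_mul]
      ring
    rw [hLHS, hRHS]
    have hkey : (((l:ℝ)-1) * a + m * b) * a * l + ((l:ℝ) * a * b) * m + (d * m) * b * b
        = μ * ((l:ℝ) * a ^ 2 + m * b ^ 2) := by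
      linear_combination ((l:ℝ) * a) * heq1 + ((m:ℝ) * b) * heq2
    nlinarith [hkey, mul_le_mul_of_nonneg_right hsum (sq_nonneg b)]

section TreeLemmas
variable {V : Type*} {T : SimpleGraph V} {A : Finset V}

lemma walk_parity (hbip : ∀ ⦃u v⦄, T.Adj u v → (u ∈ A ↔ v ∉ A)) :
    ∀ {u v : V} (p : T.Walk u v), ((u ∈ A ↔ v ∈ A) ↔ Even p.length) := by
  intro u v p
  induction p with
  | nil => simp
  | @cons u w v h q ih =>
    rw [SimpleGraph.Walk.length_cons, Nat.even_add_one, ← ih]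
    have hb := hbip h
    tauto

lemma dist_parity (hconn : T.Connected)
    (hbip : ∀ ⦃u v⦄, T.Adj u v → (u ∈ A ↔ v ∉ A)) (r u : V) :
    ((r ∈ A ↔ u ∈ A) ↔ Even (T.dist r u)) := by
  obtain ⟨p, -, hp⟩ := hconn.exists_path_of_dist r u
  rw [← hp]
  exact walk_parity hbip p

lemma adj_dist_ne (hconn : T.Connected)
    (hbip : ∀ ⦃u v⦄, T.Adj u v → (u ∈ A ↔ v ∉ A)) {r u v : V} (h : T.Adj u v) :
    T.dist r u ≠ T.dist r v := by
  intro heq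
  have h1 := dist_parity hconn hbip r u
  have h2 := dist_parity hconn hbip r v
  rw [heq] at h1
  have hb := hbip h
  tauto

lemma dist_succ_of_adj (hconn : T.Connected) {r u v : V} (h : T.Adj u v)
    (hlt : T.dist r u < T.dist r v) : T.dist r v = T.dist r u + 1 := by
  have h1 : T.dist r v ≤ T.dist r u + T.dist u v := hconn.dist_triangle
  have h2 : T.dist u v = 1 := SimpleGraph.dist_eq_one_iff_adj.mpr h
  omega

lemma parent_unique (hT : T.IsTree)
    {r w u₁ u₂ : V} (h₁ : T.Adj u₁ w) (h₂ : T.Adj u₂ w)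
    (d₁ : T.dist r u₁ < T.dist r w) (d₂ : T.dist r u₂ < T.dist r w) : u₁ = u₂ := by
  have hconn := hT.isConnected
  obtain ⟨p₁, hp₁, hl₁⟩ := hconn.exists_path_of_dist r u₁
  obtain ⟨p₂, hp₂, hl₂⟩ := hconn.exists_path_of_dist r u₂
  have hw₁ : w ∉ p₁.support := by
    intro hmem
    have := SimpleGraph.dist_le (p₁.takeUntil w hmem)
    have := SimpleGraph.Walk.length_takeUntil_le p₁ hmem
    omega
  have hw₂ : w ∉ p₂.support := by
    intro hmem
    have := SimpleGraph.dist_le (p₂.takeUntil w hmem)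
    have := SimpleGraph.Walk.length_takeUntil_le p₂ hmem
    omega
  have hq₁ : (p₁.concat h₁).IsPath := by
    rw [← SimpleGraph.Walk.isPath_reverse_iff, SimpleGraph.Walk.reverse_concat]
    rw [SimpleGraph.Walk.cons_isPath_iff]
    exact ⟨hp₁.reverse, by simpa [SimpleGraph.Walk.support_reverse] using hw₁⟩
  have hq₂ : (p₂.concat h₂).IsPath := by
    rw [← SimpleGraph.Walk.isPath_reverse_iff, SimpleGraph.Walk.reverse_concat]
    rw [SimpleGraph.Walk.cons_isPath_iff]
    exact ⟨hp₂.reverse, by simpa [SimpleGraph.Walk.support_reverse] using hw₂⟩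
  have huniq := hT.IsAcyclic.path_unique ⟨p₁.concat h₁, hq₁⟩ ⟨p₂.concat h₂, hq₂⟩
  have heq : p₁.concat h₁ = p₂.concat h₂ := congrArg Subtype.val huniq
  have heq' : (p₁.concat h₁).reverse = (p₂.concat h₂).reverse := by rw [heq]
  rw [SimpleGraph.Walk.reverse_concat, SimpleGraph.Walk.reverse_concat] at heq'
  have := congrArg (fun q => q.getVert 1) heq'
  simpa [SimpleGraph.Walk.getVert_cons_succ, SimpleGraph.Walk.getVert_zero] using this

end TreeLemmas

lemma join_free {V : Type*} [Fintype V] {T : SimpleGraph V} (hT : T.IsTree)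
    {l δ : ℕ} {A : Finset V}
    (hbip : ∀ ⦃u v⦄, T.Adj u v → (u ∈ A ↔ v ∉ A))
    (hA : A.card = l + 1)
    (hδmin : ∀ v ∈ A, δ ≤ T.degree v) (hδ2 : 2 ≤ δ)
    {m : ℕ} (H : SimpleGraph (Fin m))
    (hmax : ∀ v, H.degree v ≤ δ - 1)
    (huniq : ∀ u v, H.degree u = δ - 1 → H.degree v = δ - 1 → u = v) :
    ¬ ContainsCopy T (graphJoin (⊤ : SimpleGraph (Fin l)) H) := by
  rintro ⟨f, finj, fhom⟩
  set SL : Finset V := Finset.univ.filter (fun v => (f v).isLeft) with hSLdef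
  set A' : Finset V := A.filter (fun v => (f v).isRight) with hA'def
  set SA : Finset V := A.filter (fun v => (f v).isLeft) with hSAdef
  set SB : Finset V := SL \ A with hSBdef
  have hSLcard : SL.card ≤ l := by
    have himg : SL.image f ⊆ (Finset.univ : Finset (Fin l)).image Sum.inl := by
      intro x hx
      simp only [Finset.mem_image] at hx ⊢
      obtain ⟨v, hv, rfl⟩ := hx
      rw [hSLdef, Finset.mem_filter] at hv
      obtain ⟨i, hi⟩ := Sum.isLeft_iff.mp hv.2
      exact ⟨i, Finset.mem_univ i, hi.symm⟩
    calc SL.card = (SL.image f).card := (Finset.card_image_of_injective SL finj).symm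
      _ ≤ ((Finset.univ : Finset (Fin l)).image Sum.inl).card := Finset.card_le_card himg
      _ ≤ (Finset.univ : Finset (Fin l)).card := Finset.card_image_le
      _ = l := by simp
  have hsplit : SA.card + A'.card = A.card := by
    have hA'alt : A' = A.filter (fun v => ¬ (f v).isLeft) := by
      ext v
      rcases hfv : f v with x | x <;> simp [hA'def, hfv]
    rw [hA'alt, hSAdef]
    exact Finset.card_filter_add_card_filter_not _
  have hSASB : SA.card + SB.card ≤ l := by
    have hdisj : Disjoint SA SB := by
      rw [Finset.disjoint_left]
      intro a haSA haSB
      rw [hSAdef, Finset.mem_filter] at haSA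
      rw [hSBdef, Finset.mem_sdiff] at haSB
      exact haSB.2 haSA.1
    have hsub : SA ∪ SB ⊆ SL := by
      intro v hv
      rcases Finset.mem_union.mp hv with h | h
      · rw [hSAdef, Finset.mem_filter] at h
        rw [hSLdef, Finset.mem_filter]
        exact ⟨Finset.mem_univ v, h.2⟩
      · exact (Finset.mem_sdiff.mp h).1
    calc SA.card + SB.card = (SA ∪ SB).card := (Finset.card_union_of_disjoint hdisj).symm
      _ ≤ SL.card := Finset.card_le_card hsub
      _ ≤ l := hSLcard
  have hA'pos : 1 ≤ A'.card := by
    have hSAle : SA.card ≤ l := by omega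
    omega
  set Na : V → Finset V := fun a => (T.neighborFinset a).filter (fun b => (f b).isLeft) with hNadef
  set Ra : V → Finset V := fun a => (T.neighborFinset a).filter (fun b => (f b).isRight) with hRadef
  have hNR : ∀ a, (Na a).card + (Ra a).card = T.degree a := by
    intro a
    have hRalt : Ra a = (T.neighborFinset a).filter (fun b => ¬ (f b).isLeft) := by
      ext v
      rcases hfv : f v with x | x <;> simp [hRadef, hfv]
    rw [hRalt, hNadef]
    exact Finset.card_filter_add_card_filter_not _
  have hRa : ∀ a, ∀ x, f a = Sum.inr x → (Ra a).card ≤ H.degree x := by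
    intro a x hx
    have himg : (Ra a).image f ⊆ (H.neighborFinset x).image Sum.inr := by
      intro z hz
      simp only [Finset.mem_image] at hz ⊢
      obtain ⟨b, hb, rfl⟩ := hz
      rw [hRadef] at hb
      rw [Finset.mem_filter, SimpleGraph.mem_neighborFinset] at hb
      obtain ⟨y, hy⟩ := Sum.isRight_iff.mp hb.2
      refine ⟨y, ?_, hy.symm⟩
      rw [SimpleGraph.mem_neighborFinset]
      have hadj := fhom hb.1
      rw [hx, hy] at hadj
      exact hadj
    calc (Ra a).card = ((Ra a).image f).card := (Finset.card_image_of_injective _ finj).symm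
      _ ≤ ((H.neighborFinset x).image Sum.inr).card := Finset.card_le_card himg
      _ ≤ (H.neighborFinset x).card := Finset.card_image_le
      _ = H.degree x := rfl
  have hNa1 : ∀ a ∈ A', 1 ≤ (Na a).card ∧
      ((Na a).card ≤ 1 → ∃ x, f a = Sum.inr x ∧ H.degree x = δ - 1) := by
    intro a ha
    rw [hA'def, Finset.mem_filter] at ha
    obtain ⟨x, hx⟩ := Sum.isRight_iff.mp ha.2
    have hde := hδmin a ha.1
    have h1 := hNR a
    have h2 := hRa a x hx
    have h3 := hmax x
    constructor
    · omega
    · intro hle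
      exact ⟨x, hx, by omega⟩
  set Bad : Finset V := A'.filter (fun a => (Na a).card ≤ 1) with hBaddef
  have hBadcard : Bad.card ≤ 1 := by
    rw [Finset.card_le_one]
    intro a ha b hb
    rw [hBaddef, Finset.mem_filter] at ha hb
    obtain ⟨x, hx, hdx⟩ := (hNa1 a ha.1).2 ha.2
    obtain ⟨y, hy, hdy⟩ := (hNa1 b hb.1).2 hb.2
    have := huniq x y hdx hdy
    apply finj
    rw [hx, hy, this]
  have hsum_lower : 2 * A'.card ≤ (∑ a ∈ A', (Na a).card) + 1 := by
    have hsplitsum := Finset.sum_filter_add_sum_filter_not A' (fun a => (Na a).card ≤ 1)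
      (fun a => (Na a).card)
    have hgood : 2 * (A'.filter (fun a => ¬ (Na a).card ≤ 1)).card
        ≤ ∑ a ∈ A'.filter (fun a => ¬ (Na a).card ≤ 1), (Na a).card := by
      rw [mul_comm, ← smul_eq_mul]
      apply Finset.card_nsmul_le_sum
      intro a ha
      rw [Finset.mem_filter] at ha
      omega
    have hbadsum : Bad.card * 1 ≤ ∑ a ∈ Bad, (Na a).card := by
      rw [← smul_eq_mul]
      apply Finset.card_nsmul_le_sum
      intro a ha
      rw [hBaddef, Finset.mem_filter] at ha
      exact (hNa1 a ha.1).1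
    have hcards := Finset.card_filter_add_card_filter_not
      (s := A') (p := fun a => (Na a).card ≤ 1)
    have hBagree : (Finset.filter (fun a => (Na a).card ≤ 1) A').card = Bad.card := rfl
    have hBagree2 : (∑ x ∈ Finset.filter (fun a => (Na a).card ≤ 1) A', (Na x).card) = ∑ a ∈ Bad, (Na a).card := rfl
    omega
  -- the pair set
  set P : Finset (V × V) := A'.biUnion (fun a => (Na a).image (fun b => (a, b))) with hPdef
  have hPcard : P.card = ∑ a ∈ A', (Na a).card := by
    rw [hPdef]
    rw [Finset.card_biUnion]
    · apply Finset.sum_congr rfl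
      intro a _
      apply Finset.card_image_of_injective
      intro b1 b2 h
      simpa using h
    · intro a ha b hb hne
      rw [Function.onFun, Finset.disjoint_left]
      intro p hpa hpb
      simp only [Finset.mem_image] at hpa hpb
      obtain ⟨c1, -, rfl⟩ := hpa
      obtain ⟨c2, -, h2⟩ := hpb
      exact hne (by rw [← (Prod.mk.injEq ..).mp h2 |>.1])
  have hPmem : ∀ p ∈ P, p.1 ∈ A' ∧ p.2 ∈ Na p.1 := by
    intro p hp
    rw [hPdef, Finset.mem_biUnion] at hp
    obtain ⟨a, ha, hp⟩ := hp
    rw [Finset.mem_image] at hp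
    obtain ⟨b, hb, rfl⟩ := hp
    exact ⟨ha, hb⟩
  -- facts about members
  have hfacts : ∀ p ∈ P, p.1 ∈ A ∧ p.2 ∈ SB ∧ T.Adj p.1 p.2 := by
    intro p hp
    obtain ⟨h1, h2⟩ := hPmem p hp
    rw [hA'def, Finset.mem_filter] at h1
    rw [hNadef] at h2
    rw [Finset.mem_filter, SimpleGraph.mem_neighborFinset] at h2
    refine ⟨h1.1, ?_, h2.1⟩
    rw [hSBdef, Finset.mem_sdiff, hSLdef, Finset.mem_filter]
    have hnotA : p.2 ∉ A := (hbip h2.1).mp h1.1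
    exact ⟨⟨Finset.mem_univ _, h2.2⟩, hnotA⟩
  obtain ⟨r, -⟩ := Finset.card_pos.mp (show 0 < A.card by omega)
  set D : V → ℕ := fun v => T.dist r v with hDdef
  have hDne : ∀ p ∈ P, D p.1 ≠ D p.2 := by
    intro p hp
    exact adj_dist_ne hT.isConnected hbip (hfacts p hp).2.2
  set W : Finset V := A' ∪ SB with hWdef
  have hWne : W.Nonempty := by
    have : A'.Nonempty := Finset.card_pos.mp (by omega)
    exact this.mono Finset.subset_union_left
  obtain ⟨w₀, hw₀, hmin⟩ := W.exists_min_image D hWne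
  set ψ : V × V → V := fun p => if D p.1 < D p.2 then p.2 else p.1 with hψdef
  have hmemW : ∀ p ∈ P, p.1 ∈ W ∧ p.2 ∈ W := by
    intro p hp
    exact ⟨Finset.mem_union_left _ (hPmem p hp).1, Finset.mem_union_right _ (hfacts p hp).2.1⟩
  have himg : ∀ p ∈ P, ψ p ∈ W.erase w₀ := by
    intro p hp
    obtain ⟨hW1, hW2⟩ := hmemW p hp
    rw [Finset.mem_erase]
    by_cases h : D p.1 < D p.2
    · simp only [hψdef, if_pos h]
      refine ⟨?_, hW2⟩
      intro heq
      have := hmin p.1 hW1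
      rw [← heq] at this
      omega
    · simp only [hψdef, if_neg h]
      have hlt : D p.2 < D p.1 := by
        have := hDne p hp
        omega
      refine ⟨?_, hW1⟩
      intro heq
      have := hmin p.2 hW2
      rw [← heq] at this
      omega
  have hinj : Set.InjOn ψ ↑P := by
    intro p hp q hq heq
    rw [Finset.mem_coe] at hp hq
    have hadjp := (hfacts p hp).2.2
    have hadjq := (hfacts q hq).2.2
    have hpA := (hfacts p hp).1
    have hqA := (hfacts q hq).1
    have hpSB := (hfacts p hp).2.1
    have hqSB := (hfacts q hq).2.1
    have hpBnotA : p.2 ∉ A := (Finset.mem_sdiff.mp hpSB).2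
    have hqBnotA : q.2 ∉ A := (Finset.mem_sdiff.mp hqSB).2
    simp only [hψdef] at heq
    by_cases h1 : D p.1 < D p.2 <;> by_cases h2 : D q.1 < D q.2
    · rw [if_pos h1, if_pos h2] at heq
      have hadjq' : T.Adj q.1 p.2 := by rw [heq]; exact hadjq
      have h2' : D q.1 < D p.2 := by rw [heq]; exact h2
      exact Prod.ext (parent_unique hT hadjp hadjq' h1 h2') heq
    · rw [if_pos h1, if_neg h2] at heq
      have hq2lt : D q.2 < D q.1 := by have := hDne q hq; omega
      have hadjq' : T.Adj q.2 p.2 := by rw [heq]; exact hadjq.symm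
      have hd : D q.2 < D p.2 := by rw [heq]; exact hq2lt
      have e1 : p.1 = q.2 := parent_unique hT hadjp hadjq' h1 hd
      exact absurd (e1 ▸ hpA) hqBnotA
    · rw [if_neg h1, if_pos h2] at heq
      have hp2lt : D p.2 < D p.1 := by have := hDne p hp; omega
      have hadjq' : T.Adj q.1 p.1 := by rw [heq]; exact hadjq
      have hd : D q.1 < D p.1 := by rw [heq]; exact h2
      have e1 : p.2 = q.1 := parent_unique hT hadjp.symm hadjq' hp2lt hd
      exact absurd (e1 ▸ hqA) hpBnotA
    · rw [if_neg h1, if_neg h2] at heq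
      have hp2lt : D p.2 < D p.1 := by have := hDne p hp; omega
      have hq2lt : D q.2 < D q.1 := by have := hDne q hq; omega
      have hadjq' : T.Adj q.2 p.1 := by rw [heq]; exact hadjq.symm
      have hd : D q.2 < D p.1 := by rw [heq]; exact hq2lt
      exact Prod.ext heq (parent_unique hT hadjp.symm hadjq' hp2lt hd)
  have h1 : P.card ≤ W.card - 1 := by
    calc P.card ≤ (W.erase w₀).card := Finset.card_le_card_of_injOn ψ himg hinj
      _ = W.card - 1 := Finset.card_erase_of_mem hw₀
  have h2 : W.card ≤ A'.card + SB.card := Finset.card_union_le _ _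
  have h3 : 1 ≤ W.card := Finset.card_pos.mpr hWne
  rw [hPcard] at h1
  omega

section Construction
variable {m k q : ℕ}

lemma zmod_eq_cast_iff [NeZero m] (v : ZMod m) (i : ℕ) (h : i < m) :
    v = (i : ZMod m) ↔ v.val = i := by
  constructor
  · intro hv; rw [hv]; exact ZMod.val_cast_of_lt h
  · intro hv; rw [← hv]; exact (ZMod.natCast_rightInverse v).symm

def diffGraph (m : ℕ) (S : Finset (ZMod m)) : SimpleGraph (ZMod m) where
  Adj u v := u ≠ v ∧ (u - v ∈ S ∨ v - u ∈ S)
  symm := by constructor; rintro u v ⟨h1, h2⟩; exact ⟨h1.symm, h2.symm⟩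
  loopless := ⟨fun u h => h.1 rfl⟩

lemma diffGraph_neighborFinset [NeZero m] (S : Finset (ZMod m)) (h0 : (0 : ZMod m) ∉ S)
    (v : ZMod m) :
    (diffGraph m S).neighborFinset v = (S ∪ S.image (fun x => -x)).image (fun x => v + x) := by
  ext u
  rw [SimpleGraph.mem_neighborFinset, Finset.mem_image]
  constructor
  · rintro ⟨hne, h | h⟩
    · refine ⟨u - v, Finset.mem_union_right _ ?_, by ring⟩
      rw [Finset.mem_image]
      exact ⟨v - u, h, by ring⟩
    · exact ⟨u - v, Finset.mem_union_left _ h, by ring⟩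
  · rintro ⟨x, hx, rfl⟩
    have hx0 : x ≠ 0 := by
      intro h0'
      rw [h0'] at hx
      rcases Finset.mem_union.mp hx with h | h
      · exact h0 h
      · rw [Finset.mem_image] at h
        obtain ⟨y, hy, hy0⟩ := h
        rw [neg_eq_zero] at hy0
        exact h0 (hy0 ▸ hy)
    refine ⟨by intro hh; exact hx0 (by linear_combination -hh), ?_⟩
    rcases Finset.mem_union.mp hx with h | h
    · right; rwa [add_sub_cancel_left]
    · left
      rw [Finset.mem_image] at h
      obtain ⟨y, hy, hy0⟩ := h
      have : v - (v + x) = y := by linear_combination hy0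
      rwa [this]

lemma diffGraph_degree [NeZero m] (S : Finset (ZMod m)) (h0 : (0 : ZMod m) ∉ S) (v : ZMod m) :
    (diffGraph m S).degree v = (S ∪ S.image (fun x => -x)).card := by
  rw [← SimpleGraph.card_neighborFinset_eq_degree, diffGraph_neighborFinset S h0 v,
    Finset.card_image_of_injective _ (add_right_injective v)]

def rangeD (m k : ℕ) : Finset (ZMod m) := (Finset.range k).image (fun i => ((i + 1 : ℕ) : ZMod m))

lemma mem_rangeD [NeZero m] (hk : k < m) (x : ZMod m) :
    x ∈ rangeD m k ↔ 1 ≤ x.val ∧ x.val ≤ k := by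
  simp only [rangeD, Finset.mem_image, Finset.mem_range]
  constructor
  · rintro ⟨i, hi, rfl⟩
    rw [ZMod.val_cast_of_lt (by omega)]
    omega
  · rintro ⟨h1, h2⟩
    refine ⟨x.val - 1, by omega, ?_⟩
    rw [show x.val - 1 + 1 = x.val by omega]
    exact ZMod.natCast_rightInverse x

lemma zero_not_mem_rangeD [NeZero m] (hk : k < m) : (0 : ZMod m) ∉ rangeD m k := by
  rw [mem_rangeD hk, ZMod.val_zero]
  omega

lemma mem_rangeD_neg [NeZero m] (hk : k < m) (x : ZMod m) :
    x ∈ (rangeD m k).image (fun x => -x) ↔ m - k ≤ x.val ∧ x.val ≤ m - 1 := by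
  have hmem : x ∈ (rangeD m k).image (fun x => -x) ↔ -x ∈ rangeD m k := by
    rw [Finset.mem_image]
    constructor
    · rintro ⟨y, hy, rfl⟩; rwa [neg_neg]
    · intro h; exact ⟨-x, h, by rw [neg_neg]⟩
  rw [hmem, mem_rangeD hk]
  rcases eq_or_ne x 0 with rfl | hx0
  · rw [neg_zero, ZMod.val_zero]
    omega
  · rw [ZMod.neg_val, if_neg hx0]
    have h1 : x.val < m := x.val_lt
    have h2 : x.val ≠ 0 := fun h => hx0 ((ZMod.val_eq_zero x).mp h)
    omega

lemma card_rangeD [NeZero m] (hk : k < m) : (rangeD m k).card = k := by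
  rw [rangeD, Finset.card_image_of_injOn, Finset.card_range]
  intro i hi j hj hij
  rw [Finset.mem_coe, Finset.mem_range] at hi hj
  have := congrArg ZMod.val hij
  rw [ZMod.val_cast_of_lt (by omega), ZMod.val_cast_of_lt (by omega)] at this
  omega

lemma card_Ek [NeZero m] (hk : 2 * k + 1 ≤ m) :
    ((rangeD m k) ∪ (rangeD m k).image (fun x => -x)).card = 2 * k := by
  rw [Finset.card_union_of_disjoint, card_rangeD (by omega),
    Finset.card_image_of_injective _ neg_injective, card_rangeD (by omega)]
  · ring
  · rw [Finset.disjoint_left]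
    intro x h1 h2
    rw [mem_rangeD (by omega)] at h1
    rw [mem_rangeD_neg (by omega)] at h2
    omega

/-- Even-degree regular circulant. -/
lemma even_case [NeZero m] (hk : 2 * k + 1 ≤ m) (v : ZMod m) :
    (diffGraph m (rangeD m k)).degree v = 2 * k := by
  rw [diffGraph_degree _ (zero_not_mem_rangeD (by omega)) v, card_Ek hk]

end Construction

section Construction2
variable {m k q : ℕ}

/-- Odd degree, even order: add the jump `m/2`. -/
lemma odd_even_case [NeZero m] (hk : 2 * k + 2 ≤ m) (hme : m % 2 = 0) (v : ZMod m) :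
    (diffGraph m (rangeD m k ∪ {((m / 2 : ℕ) : ZMod m)})).degree v = 2 * k + 1 := by
  set h : ZMod m := ((m / 2 : ℕ) : ZMod m) with hh
  have hm0 : 0 < m := Nat.pos_of_ne_zero (NeZero.ne m)
  have hval : h.val = m / 2 := ZMod.val_cast_of_lt (by omega)
  have hhne : h ≠ 0 := by
    intro h0
    rw [h0, ZMod.val_zero] at hval
    omega
  have hnegh : -h = h := by
    rw [neg_eq_iff_add_eq_zero, hh, ← Nat.cast_add, show m / 2 + m / 2 = m by omega,
      ZMod.natCast_self]
  have h0 : (0 : ZMod m) ∉ rangeD m k ∪ {h} := by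
    rw [Finset.mem_union, Finset.mem_singleton]
    push_neg
    exact ⟨zero_not_mem_rangeD (by omega), fun he => hhne he.symm⟩
  rw [diffGraph_degree _ h0 v]
  have himg : (rangeD m k ∪ {h}).image (fun x => -x)
      = (rangeD m k).image (fun x => -x) ∪ {h} := by
    rw [Finset.image_union, Finset.image_singleton, hnegh]
  rw [himg]
  have hEq : (rangeD m k ∪ {h}) ∪ ((rangeD m k).image (fun x => -x) ∪ {h})
      = ((rangeD m k) ∪ (rangeD m k).image (fun x => -x)) ∪ {h} := by
    ext x
    simp only [Finset.mem_union, Finset.mem_singleton]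
    tauto
  rw [hEq, Finset.card_union_of_disjoint, card_Ek (by omega), Finset.card_singleton]
  rw [Finset.disjoint_left]
  intro x hx hxh
  rw [Finset.mem_singleton] at hxh
  subst hxh
  rcases Finset.mem_union.mp hx with h1 | h1
  · rw [mem_rangeD (by omega)] at h1
    omega
  · rw [mem_rangeD_neg (by omega)] at h1
    omega

/-- near-perfect matching graph for the odd-odd case -/
def matchGraph (m q : ℕ) : SimpleGraph (ZMod m) where
  Adj u v := u ≠ v ∧ ∃ i : ℕ, i ≤ q ∧
    ((u = (i : ZMod m) ∧ v = (i : ZMod m) + (q : ZMod m)) ∨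
     (v = (i : ZMod m) ∧ u = (i : ZMod m) + (q : ZMod m)))
  symm := by
    constructor
    rintro u v ⟨h1, i, hi, h⟩
    exact ⟨h1.symm, i, hi, h.symm⟩
  loopless := ⟨fun u h => h.1 rfl⟩

lemma matchGraph_neighborFinset [NeZero m] (hq : 2 * q + 1 = m) (hq1 : 1 ≤ q) (v : ZMod m) :
    (matchGraph m q).neighborFinset v =
      if v.val < q then {v + (q : ZMod m)}
      else if v.val = q then {v + (q : ZMod m), v - (q : ZMod m)}
      else {v - (q : ZMod m)} := by
  have hm3 : 3 ≤ m := by omega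
  have hqval : ((q : ZMod m)).val = q := ZMod.val_cast_of_lt (by omega)
  have hqne : (q : ZMod m) ≠ 0 := by
    intro h0
    rw [h0, ZMod.val_zero] at hqval
    omega
  have hvval : v.val < m := v.val_lt
  ext u
  rw [SimpleGraph.mem_neighborFinset]
  constructor
  · rintro ⟨hne, i, hi, hcase | hcase⟩
    · obtain ⟨hv, hu⟩ := hcase
      have hvv : v.val = i := (zmod_eq_cast_iff v i (by omega)).mp hv
      have huu : u = v + (q : ZMod m) := by rw [hu, hv]
      rcases lt_trichotomy v.val q with h | h | h
      · rw [if_pos h, Finset.mem_singleton]; exact huu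
      · rw [if_neg (by omega), if_pos h, Finset.mem_insert]; exact Or.inl huu
      · omega
    · obtain ⟨hu, hv⟩ := hcase
      have hv' : v = ((i + q : ℕ) : ZMod m) := by rw [hv]; push_cast; ring
      have hvv : v.val = i + q := (zmod_eq_cast_iff v (i + q) (by omega)).mp hv'
      have huu : u = v - (q : ZMod m) := by rw [hu, hv]; ring
      rcases lt_trichotomy v.val q with h | h | h
      · omega
      · rw [if_neg (by omega), if_pos h, Finset.mem_insert, Finset.mem_singleton]
        exact Or.inr huu
      · rw [if_neg (by omega), if_neg (by omega), Finset.mem_singleton]; exact huu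
  · intro hu
    by_cases h1 : v.val < q
    · rw [if_pos h1, Finset.mem_singleton] at hu
      refine ⟨?_, v.val, by omega, Or.inl ⟨(ZMod.natCast_rightInverse v).symm, ?_⟩⟩
      · rw [hu]; intro hh; exact hqne (by linear_combination -hh)
      · rw [hu, (ZMod.natCast_rightInverse v)]
    · by_cases h2 : v.val = q
      · rw [if_neg h1, if_pos h2, Finset.mem_insert, Finset.mem_singleton] at hu
        rcases hu with hu | hu
        · refine ⟨?_, v.val, by omega, Or.inl ⟨(ZMod.natCast_rightInverse v).symm, ?_⟩⟩
          · rw [hu]; intro hh; exact hqne (by linear_combination -hh)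
          · rw [hu, (ZMod.natCast_rightInverse v)]
        · have hvq : v = ((q : ℕ) : ZMod m) := (zmod_eq_cast_iff v q (by omega)).mpr h2
          refine ⟨?_, 0, by omega, Or.inr ⟨?_, ?_⟩⟩
          · rw [hu]; intro hh; exact hqne (by linear_combination hh)
          · rw [hu, hvq]; push_cast; ring
          · rw [hvq]; push_cast; ring
      · rw [if_neg h1, if_neg h2, Finset.mem_singleton] at hu
        have h3 : q < v.val := by omega
        have h4 : ((v.val - q : ℕ) : ZMod m) + (q : ZMod m) = v := by
          rw [← Nat.cast_add, show v.val - q + q = v.val by omega]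
          exact ZMod.natCast_rightInverse v
        have hcast : ((v.val - q : ℕ) : ZMod m) = v - (q : ZMod m) := by
          linear_combination h4
        refine ⟨?_, v.val - q, by omega, Or.inr ⟨?_, ?_⟩⟩
        · rw [hu]; intro hh; exact hqne (by linear_combination hh)
        · rw [hu, hcast]
        · rw [hcast]; ring

lemma matchGraph_degree [NeZero m] (hq : 2 * q + 1 = m) (hq1 : 1 ≤ q) (v : ZMod m) :
    (matchGraph m q).degree v = if v.val = q then 2 else 1 := by
  rw [← SimpleGraph.card_neighborFinset_eq_degree, matchGraph_neighborFinset hq hq1 v]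
  have hqval : ((q : ZMod m)).val = q := ZMod.val_cast_of_lt (by omega)
  by_cases h1 : v.val < q
  · rw [if_pos h1, if_neg (by omega), Finset.card_singleton]
  · by_cases h2 : v.val = q
    · rw [if_neg h1, if_pos h2, if_pos h2]
      apply Finset.card_pair
      intro he
      have h2q : (q : ZMod m) + (q : ZMod m) = 0 := by linear_combination he
      rw [← Nat.cast_add] at h2q
      have := congrArg ZMod.val h2q
      rw [ZMod.val_cast_of_lt (by omega), ZMod.val_zero] at this
      omega
    · rw [if_neg h1, if_neg h2, if_neg h2, Finset.card_singleton]
end Construction2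

section Construction3
variable {m k q : ℕ}

lemma oddodd_degree [NeZero m] (hq : 2 * q + 1 = m) (hk : k + 1 ≤ q) (v : ZMod m) :
    (diffGraph m (rangeD m k) ⊔ matchGraph m q).degree v
      = 2 * k + (if v.val = q then 2 else 1) := by
  have hq1 : 1 ≤ q := by omega
  have hqval : ((q : ZMod m)).val = q := ZMod.val_cast_of_lt (by omega)
  have hqne : (q : ZMod m) ≠ 0 := by
    intro h0; rw [h0, ZMod.val_zero] at hqval; omega
  have hvq : ((q : ZMod m)) ∉ rangeD m k := by
    rw [mem_rangeD (by omega), hqval]; omega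
  have hnq : (-(q : ZMod m)) ∉ rangeD m k := by
    rw [mem_rangeD (by omega), ZMod.neg_val, if_neg hqne, hqval]
    omega
  have hdisj : ∀ u, (diffGraph m (rangeD m k)).Adj v u → ¬ (matchGraph m q).Adj v u := by
    intro u hd hm'
    obtain ⟨hne, i, hi, hc⟩ := hm'
    have hvals : (v - u = (q : ZMod m)) ∨ (u - v = (q : ZMod m)) := by
      rcases hc with ⟨hv, hu⟩ | ⟨hu, hv⟩
      · right; rw [hu, hv]; ring
      · left; rw [hu, hv]; ring
    obtain ⟨-, hd2⟩ := hd
    rcases hvals with h | h <;> rcases hd2 with h2 | h2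
    · rw [h] at h2; exact hvq h2
    · have h3 : u - v = -(q : ZMod m) := by linear_combination -h
      rw [h3] at h2; exact hnq h2
    · have h3 : v - u = -(q : ZMod m) := by linear_combination -h
      rw [h3] at h2; exact hnq h2
    · rw [h] at h2; exact hvq h2
  have hnf : (diffGraph m (rangeD m k) ⊔ matchGraph m q).neighborFinset v
      = (diffGraph m (rangeD m k)).neighborFinset v ∪ (matchGraph m q).neighborFinset v := by
    ext u
    simp [SimpleGraph.mem_neighborFinset, SimpleGraph.sup_adj]
  rw [← SimpleGraph.card_neighborFinset_eq_degree, hnf, Finset.card_union_of_disjoint]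
  · rw [SimpleGraph.card_neighborFinset_eq_degree, SimpleGraph.card_neighborFinset_eq_degree,
      even_case (by omega) v, matchGraph_degree hq hq1 v]
  · rw [Finset.disjoint_left]
    intro u h1 h2
    rw [SimpleGraph.mem_neighborFinset] at h1 h2
    exact hdisj u h1 h2

lemma degree_eq_of_eq {V : Type*} {G : SimpleGraph V} {v : V}
    {i1 i2 : Fintype (G.neighborSet v)} {n : ℕ}
    (h : @SimpleGraph.degree V G v i1 = n) : @SimpleGraph.degree V G v i2 = n := by
  rwa [Subsingleton.elim i2 i1]

lemma exists_goodGraph (d m : ℕ) [NeZero m] (hm : 2 * d + 5 ≤ m) :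
    ∃ H : SimpleGraph (ZMod m),
      (∀ v, H.degree v ≤ d + 1) ∧
      (∀ u v, H.degree u = d + 1 → H.degree v = d + 1 → u = v) ∧
      (∀ v, d ≤ H.degree v) := by
  rcases Nat.even_or_odd d with ⟨k, hk⟩ | ⟨k, hk⟩
  · refine ⟨diffGraph m (rangeD m k), ?_, ?_, ?_⟩
    · intro v; rw [degree_eq_of_eq (even_case (by omega) v)]; omega
    · intro u v h1 h2
      rw [degree_eq_of_eq (even_case (by omega) u)] at h1
      omega
    · intro v; rw [degree_eq_of_eq (even_case (by omega) v)]; omega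
  · rcases Nat.even_or_odd m with ⟨t, ht⟩ | ⟨t, ht⟩
    · refine ⟨diffGraph m (rangeD m k ∪ {((m / 2 : ℕ) : ZMod m)}), ?_, ?_, ?_⟩
      · intro v; rw [degree_eq_of_eq (odd_even_case (by omega) (by omega) v)]; omega
      · intro u v h1 h2
        rw [degree_eq_of_eq (odd_even_case (by omega) (by omega) u)] at h1
        omega
      · intro v; rw [degree_eq_of_eq (odd_even_case (by omega) (by omega) v)]; omega
    · set q : ℕ := (m - 1) / 2 with hqdef
      have hq : 2 * q + 1 = m := by omega
      have hkq : k + 1 ≤ q := by omega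
      refine ⟨diffGraph m (rangeD m k) ⊔ matchGraph m q, ?_, ?_, ?_⟩
      · intro v
        rw [degree_eq_of_eq (oddodd_degree hq hkq v)]
        split <;> omega
      · intro u v h1 h2
        rw [degree_eq_of_eq (oddodd_degree hq hkq u)] at h1
        rw [degree_eq_of_eq (oddodd_degree hq hkq v)] at h2
        have hu : u.val = q := by by_contra h; rw [if_neg h] at h1; omega
        have hv : v.val = q := by by_contra h; rw [if_neg h] at h2; omega
        calc u = ((u.val : ℕ) : ZMod m) := (ZMod.natCast_rightInverse u).symm
          _ = ((v.val : ℕ) : ZMod m) := by rw [hu, hv]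
          _ = v := ZMod.natCast_rightInverse v
      · intro v
        rw [degree_eq_of_eq (oddodd_degree hq hkq v)]
        split <;> omega

end Construction3

lemma eigen_comap {α β : Type*} [Fintype α] [Fintype β] (e : α ≃ β) (G : SimpleGraph α)
    {μ : ℝ} (h : Module.End.HasEigenvalue (Matrix.toLin' (G.adjMatrix ℝ)) μ) :
    Module.End.HasEigenvalue (Matrix.toLin' ((G.comap e.symm).adjMatrix ℝ)) μ := by
  obtain ⟨w, hw, hwne⟩ := h.exists_hasEigenvector
  rw [Module.End.mem_eigenspace_iff] at hw
  rw [Matrix.toLin'_apply] at hw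
  apply Module.End.hasEigenvalue_of_hasEigenvector (x := fun x => w (e.symm x))
  constructor
  · rw [Module.End.mem_eigenspace_iff, Matrix.toLin'_apply]
    funext x
    have hentry : ∀ y, ((G.comap e.symm).adjMatrix ℝ) x y = (G.adjMatrix ℝ) (e.symm x) (e.symm y) := by
      intro y
      rw [SimpleGraph.adjMatrix_apply, SimpleGraph.adjMatrix_apply]
      exact if_congr Iff.rfl rfl rfl
    show ∑ y, ((G.comap e.symm).adjMatrix ℝ) x y * w (e.symm y) = (μ • fun x => w (e.symm x)) x
    rw [Finset.sum_congr rfl (fun y _ => by rw [hentry y])]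
    have hre := Fintype.sum_equiv e.symm
      (fun y => (G.adjMatrix ℝ) (e.symm x) (e.symm y) * w (e.symm y))
      (fun z => (G.adjMatrix ℝ) (e.symm x) z * w z) (fun y => rfl)
    rw [hre]
    have := congrFun hw (e.symm x)
    exact this
  · intro h0
    apply hwne
    funext z
    have := congrFun h0 (e z)
    simpa using this

lemma containsCopy_comap {V α β : Type*} (T : SimpleGraph V) (e : α ≃ β) (G : SimpleGraph α)
    (h : ContainsCopy T (G.comap e.symm)) : ContainsCopy T G := by
  obtain ⟨f, finj, fhom⟩ := h
  exact ⟨fun v => e.symm (f v), fun a b hab => finj (by simpa using hab), fun a b hab => fhom hab⟩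

lemma degree_inst_eq {V : Type*} {G : SimpleGraph V} {v : V}
    (i1 i2 : Fintype (G.neighborSet v)) :
    @SimpleGraph.degree V G v i1 = @SimpleGraph.degree V G v i2 := by
  rw [Subsingleton.elim i1 i2]

lemma exists_goodGraphFin (d m : ℕ) (hm : 2 * d + 5 ≤ m) :
    ∃ H : SimpleGraph (Fin m),
      (∀ v, H.degree v ≤ d + 1) ∧
      (∀ u v, H.degree u = d + 1 → H.degree v = d + 1 → u = v) ∧
      (∀ v, d ≤ H.degree v) := by
  obtain ⟨m', rfl⟩ : ∃ m', m = m' + 1 := ⟨m - 1, by omega⟩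
  haveI : NeZero (m' + 1) := ⟨by omega⟩
  obtain ⟨Hz, h1, h2, h3⟩ := exists_goodGraph d (m' + 1) hm
  refine ⟨Hz, ?_, ?_, ?_⟩
  · intro v
    exact le_trans (le_of_eq (degree_inst_eq _ _)) (h1 v)
  · intro u v e1 e2
    exact h2 u v ((degree_inst_eq _ _).trans e1) ((degree_inst_eq _ _).trans e2)
  · intro v
    exact le_trans (h3 v) (le_of_eq (degree_inst_eq _ _))

lemma fdn_facts (l δ n : ℕ) (hδ2 : 2 ≤ δ) (hn : δ + l ≤ n) :
    0 ≤ fdn l ((δ:ℝ) - 2) n ∧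
    (fdn l ((δ:ℝ) - 2) n) ^ 2 - ((l:ℝ) + ((δ:ℝ) - 2) - 1) * fdn l ((δ:ℝ) - 2) n
      - ((n:ℝ) * (l:ℝ) + ((δ:ℝ) - 2) - (l:ℝ) * ((δ:ℝ) - 2) - (l:ℝ) ^ 2) = 0 := by
  have hd : (0:ℝ) ≤ (δ:ℝ) - 2 := by
    have : (2:ℝ) ≤ (δ:ℝ) := by exact_mod_cast hδ2
    linarith
  have hln : (δ:ℝ) + (l:ℝ) ≤ (n:ℝ) := by exact_mod_cast hn
  have hl0 : (0:ℝ) ≤ (l:ℝ) := Nat.cast_nonneg l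
  set d : ℝ := (δ:ℝ) - 2 with hddef
  set c : ℝ := (l:ℝ) + d - 1 with hcdef
  set p : ℝ := (n:ℝ) * (l:ℝ) + d - (l:ℝ) * d - (l:ℝ) ^ 2 with hpdef
  have hp : 0 ≤ p := by
    have h2 : 0 ≤ (n:ℝ) - d - (l:ℝ) := by rw [hddef]; linarith
    have h3 : p = (l:ℝ) * ((n:ℝ) - d - (l:ℝ)) + d := by rw [hpdef]; ring
    rw [h3]
    have := mul_nonneg hl0 h2
    linarith
  have harg : 0 ≤ c ^ 2 + 4 * p := by nlinarith [sq_nonneg c]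
  have hμ : fdn l d n = (c + Real.sqrt (c ^ 2 + 4 * p)) / 2 := by
    rw [fdn, hcdef, hpdef]
  set s : ℝ := Real.sqrt (c ^ 2 + 4 * p) with hsdef
  have hs : s ^ 2 = c ^ 2 + 4 * p := Real.sq_sqrt harg
  have habs : |c| ≤ s := by
    rw [hsdef, ← Real.sqrt_sq_eq_abs]
    exact Real.sqrt_le_sqrt (by linarith)
  constructor
  · rw [hμ]
    have := neg_abs_le c
    linarith
  · rw [hμ]
    linear_combination hs / 4

/-- Fix a tree `T` with bipartition `{A,B}`, `|A| = l+1 ≤ |B|`, and `δ ≥ 2` the minimum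
degree over `A`.  For all sufficiently large `n`: any graph `K_l ∨ H₂` where `H₂` has
`n − l` vertices, maximum degree at most `δ−1`, and at most one vertex of degree `δ−1`
is `T`-free; if moreover `H₂` is `(δ−2)`-regular then its spectral radius is at least
`f(δ−2, n)`; and consequently `spex(n, T) ≥ f(δ−2, n)`. -/
theorem spex_lower_bound {V : Type*} [Fintype V]
    (T : SimpleGraph V) (hT : T.IsTree) (l δ : ℕ)
    (A : Finset V) (hbip : ∀ ⦃u v⦄, T.Adj u v → (u ∈ A ↔ v ∉ A))
    (hA : A.card = l + 1) (hAB : A.card ≤ Aᶜ.card)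
    (hδmin : ∀ v ∈ A, δ ≤ T.degree v) (hδmem : ∃ v ∈ A, T.degree v = δ)
    (hδ2 : 2 ≤ δ) :
    ∃ N : ℕ, ∀ n : ℕ, N ≤ n →
      (∀ H₂ : SimpleGraph (Fin (n - l)),
        (∀ v, H₂.degree v ≤ δ - 1) →
        (∀ u v, H₂.degree u = δ - 1 → H₂.degree v = δ - 1 → u = v) →
          ¬ ContainsCopy T (graphJoin (⊤ : SimpleGraph (Fin l)) H₂) ∧
          (H₂.IsRegularOfDegree (δ - 2) →
            fdn l ((δ : ℝ) - 2) n ≤ specRad (graphJoin (⊤ : SimpleGraph (Fin l)) H₂))) ∧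
      fdn l ((δ : ℝ) - 2) n ≤ spex n T := by
  refine ⟨3 * δ + 3 * l + 12, fun n hn => ?_⟩
  have hln : l ≤ n := by omega
  have hm1 : 1 ≤ n - l := by omega
  have hmR : ((n - l : ℕ) : ℝ) = (n:ℝ) - (l:ℝ) := by
    rw [Nat.cast_sub hln]
  obtain ⟨hμ0, hquad⟩ := fdn_facts l δ n hδ2 (by omega)
  set d : ℝ := (δ:ℝ) - 2 with hddef
  set μ : ℝ := fdn l d n with hμdef
  set b : ℝ := μ + 1 - (l:ℝ) with hbdef
  have heq1 : ((l:ℝ) - 1) * ((n - l : ℕ) : ℝ) + ((n - l : ℕ) : ℝ) * b = μ * ((n - l : ℕ) : ℝ) := by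
    rw [hbdef]; ring
  have heq2 : (l:ℝ) * ((n - l : ℕ) : ℝ) + d * b = μ * b := by
    rw [hmR, hbdef]
    linear_combination -hquad
  have hxpos : 0 < (l:ℝ) * ((n - l : ℕ) : ℝ) ^ 2 + ((n - l : ℕ) : ℝ) * b ^ 2 := by
    have hm1R : (1:ℝ) ≤ ((n - l : ℕ) : ℝ) := by exact_mod_cast hm1
    rcases Nat.eq_zero_or_pos l with hl0 | hlpos
    · have : (l:ℝ) = 0 := by exact_mod_cast hl0
      rw [this, hbdef]
      have : (l:ℝ) = 0 := this
      nlinarith [hμ0]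
    · have hl1R : (1:ℝ) ≤ (l:ℝ) := by exact_mod_cast hlpos
      nlinarith [sq_nonneg b]
  have hδcast : ((δ - 2 : ℕ) : ℝ) = d := by
    rw [Nat.cast_sub hδ2, hddef]; norm_num
  constructor
  · intro H₂ hmax huniq
    refine ⟨join_free hT hbip hA hδmin hδ2 H₂ hmax huniq, ?_⟩
    intro hreg
    have hsum : d * ((n - l : ℕ) : ℝ) ≤ ∑ v, (H₂.degree v : ℝ) := by
      rw [Finset.sum_congr rfl (fun v _ => by rw [hreg v])]
      rw [Finset.sum_const, Finset.card_univ, Fintype.card_fin, nsmul_eq_mul, hδcast]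
      exact le_of_eq (by ring)
    obtain ⟨ν, hev, hle⟩ := join_eigen hm1 H₂ hsum heq1 heq2 hxpos
    exact le_trans hle (le_specRad_of_eigen _ hev)
  · -- spex lower bound
    obtain ⟨HF, hmaxF, huniqF, hminF⟩ := exists_goodGraphFin (δ - 2) (n - l) (by omega)
    have hmax' : ∀ v, HF.degree v ≤ δ - 1 := by
      intro v
      have := hmaxF v
      omega
    have huniq' : ∀ u v, HF.degree u = δ - 1 → HF.degree v = δ - 1 → u = v := by
      intro u v h1 h2
      exact huniqF u v (by omega) (by omega)
    have hsum : d * ((n - l : ℕ) : ℝ) ≤ ∑ v, (HF.degree v : ℝ) := by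
      have h1 : (Finset.univ : Finset (Fin (n - l))).card • (δ - 2)
          ≤ ∑ v, HF.degree v := Finset.card_nsmul_le_sum _ _ _ (fun v _ => hminF v)
      rw [Finset.card_univ, Fintype.card_fin, smul_eq_mul] at h1
      have h2 : (((n - l) * (δ - 2) : ℕ) : ℝ) ≤ ((∑ v, HF.degree v : ℕ) : ℝ) := by
        exact_mod_cast h1
      rw [Nat.cast_sum] at h2
      rw [Nat.cast_mul, hδcast] at h2
      linarith
    obtain ⟨ν, hev, hle⟩ := join_eigen hm1 HF hsum heq1 heq2 hxpos
    set e : Fin l ⊕ Fin (n - l) ≃ Fin n := finSumFinEquiv.trans (finCongr (by omega)) with hedef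
    set G' : SimpleGraph (Fin n) := (graphJoin (⊤ : SimpleGraph (Fin l)) HF).comap e.symm with hG'def
    have hfree' : ¬ ContainsCopy T G' := by
      intro hc
      exact join_free hT hbip hA hδmin hδ2 HF hmax' huniq' (containsCopy_comap T e _ hc)
    have heig : Module.End.HasEigenvalue (Matrix.toLin' (G'.adjMatrix ℝ)) ν :=
      eigen_comap e _ hev
    have hspec : μ ≤ specRad G' := le_trans hle (le_specRad_of_eigen G' heig)
    have hbdd : BddAbove {r : ℝ | ∃ G : SimpleGraph (Fin n), ¬ ContainsCopy T G ∧ specRad G = r} := by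
      refine ⟨(n:ℝ), ?_⟩
      rintro r ⟨G, -, rfl⟩
      exact le_trans (specRad_le_card G) (by simp)
    have hmem : specRad G' ∈ {r : ℝ | ∃ G : SimpleGraph (Fin n), ¬ ContainsCopy T G ∧ specRad G = r} :=
      ⟨G', hfree', rfl⟩
    exact le_trans hspec (le_csSup hbdd hmem)
end

section
/- Let H = K_l ∨ H₂ where H₂ is a graph on n−l vertices with maximum degree d and at most c vertices of degree exactly d, where d ≥ 1, l ≥ 1 and n is sufficiently large (so that √(l(n−l)) > d). Then λ(H) ≤ f(d−1, n) + 2c/n, where f(d−1,n) is the largest root of x² − (l+d−2)x + (l−1)(d−1) − l(n−l) = 0. -/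
open scoped Classical

lemma key_finish (l d n s : ℝ) (hn0 : 0 < n)
    (h3s : d - l + 2 ≤ 3*s)
    (hq4 : 0 ≤ 3*s^2 - 4*(d-l+2)*s + (d^2 - 2*l*d - 3*l^2))
    (hs2 : s^2 = (l-d)^2 + 4*(l*(n-l))) :
    l*n^3 ≤ ((s - (d-l) - 2)*n + 4)*(s*n + 2) := by
  nlinarith [mul_nonneg hq4 (sq_nonneg n), mul_nonneg (by linarith : (0:ℝ) ≤ 3*s - (d-l+2)) hn0.le]

lemma le_of_sq_le' (c s : ℝ) (hc : 0 ≤ c) (hs : 0 ≤ s) (h : c^2 ≤ s^2) : c ≤ s := by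
  nlinarith

set_option maxHeartbeats 1000000 in
lemma key (l d n : ℕ) (s : ℝ) (hl : 1 ≤ l) (hd : 1 ≤ d) (hn : l + 1 ≤ n)
    (hL : (d:ℝ)^2 + 1 ≤ l*((n:ℝ)-l)) (hs : 0 ≤ s)
    (hs2 : s^2 = ((l:ℝ)-d)^2 + 4*((l:ℝ)*((n:ℝ)-l))) :
    (l:ℝ)*(n:ℝ)^3 ≤ ((s - ((d:ℝ)-l) - 2)*n + 4)*(s*n + 2) := by
  have hn0 : (0:ℝ) < n := by
    have : 0 < n := by omega
    exact_mod_cast this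
  have hl1 : (1:ℝ) ≤ l := by exact_mod_cast hl
  have hd1 : (1:ℝ) ≤ d := by exact_mod_cast hd
  have hA : 4*(d:ℝ)^2 + 4 ≤ s^2 := by nlinarith [sq_nonneg ((l:ℝ)-(d:ℝ))]
  have hs2d : 2*(d:ℝ) ≤ s := le_of_sq_le' _ _ (by linarith) hs (by nlinarith)
  have h3s : (d:ℝ) - l + 2 ≤ 3*s := by linarith
  rcases (by omega : d + 2 ≤ l ∨ l + 1 ≤ d ∨ (d = l ∧ 2 ≤ d) ∨ (l = d + 1 ∧ 2 ≤ d) ∨ (l = 2 ∧ d = 1) ∨ (d = 1 ∧ l = 1)) with h | h | ⟨h, h2⟩ | ⟨h, h2⟩ | ⟨h, h2⟩ | ⟨h, h2⟩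
  · -- d + 2 ≤ l
    have hc : (d:ℝ) + 2 ≤ l := by exact_mod_cast h
    have hsld : (l:ℝ) - d ≤ s := le_of_sq_le' _ _ (by linarith) hs (by nlinarith)
    refine key_finish l d n s hn0 h3s ?_ hs2
    nlinarith [sq_nonneg ((l:ℝ) - 2*d - 1), sq_nonneg ((d:ℝ)-1), mul_nonneg (by linarith : (0:ℝ) ≤ (l:ℝ) - d - 2) (by linarith : (0:ℝ) ≤ s - ((l:ℝ) - d))]
  · -- l + 1 ≤ d
    have hc : (l:ℝ) + 1 ≤ d := by exact_mod_cast h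
    refine key_finish l d n s hn0 h3s ?_ hs2
    nlinarith [sq_nonneg (s - ((d:ℝ)-l+2)), mul_nonneg (by linarith : (0:ℝ) ≤ (d:ℝ) - l) (by linarith : (0:ℝ) ≤ (d:ℝ) + l - 2)]
  · -- d = l, d ≥ 2
    have hc : (l:ℝ) = d := by exact_mod_cast h.symm
    have hd2 : (2:ℝ) ≤ d := by exact_mod_cast h2
    refine key_finish l d n s hn0 h3s ?_ hs2
    have hs4 : 4 ≤ s := le_of_sq_le' _ _ (by norm_num) hs (by nlinarith)
    have hq : 0 ≤ 2*s^2 - 8*s + 4 := by nlinarith [mul_nonneg hs (by linarith : (0:ℝ) ≤ s - 4)]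
    rw [hc]; linarith [hA, hq]
  · -- l = d+1, d ≥ 2
    have hc : (l:ℝ) = d + 1 := by exact_mod_cast h
    have hd2 : (2:ℝ) ≤ d := by exact_mod_cast h2
    refine key_finish l d n s hn0 h3s ?_ hs2
    have hs4 : 4 ≤ s := le_of_sq_le' _ _ (by norm_num) hs (by nlinarith)
    have hq : 0 ≤ 2*s^2 - 4*s - 8*(d:ℝ) + 2 := by
      nlinarith [mul_nonneg hs (by linarith : (0:ℝ) ≤ s - 4), hs2d]
    rw [hc]; nlinarith [hA, hq]
  · -- l = 2, d = 1
    have hc : (l:ℝ) = 2 := by exact_mod_cast h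
    have hcd : (d:ℝ) = 1 := by exact_mod_cast h2
    refine key_finish l d n s hn0 h3s ?_ hs2
    rw [hc, hcd] at hs2 hL ⊢
    have hs3 : 3 ≤ s := le_of_sq_le' _ _ (by norm_num) hs (by nlinarith)
    nlinarith [mul_nonneg (by linarith : (0:ℝ) ≤ s - 3) (by linarith : (0:ℝ) ≤ 3*s + 5)]
  · -- d = 1, l = 1 : bypasses key_finish
    have hcd : (d:ℝ) = 1 := by exact_mod_cast h
    have hcl : (l:ℝ) = 1 := by exact_mod_cast h2
    rw [hcd, hcl] at hs2 hL ⊢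
    have hn3 : (3:ℝ) ≤ n := by nlinarith
    have hsb : s ≤ ((n:ℝ)+3)/2 := by nlinarith [sq_nonneg (s - 4)]
    have hk : s*(2*(n:ℝ)*((n:ℝ)-3)) ≤ (((n:ℝ)+3)/2)*(2*(n:ℝ)*((n:ℝ)-3)) :=
      mul_le_mul_of_nonneg_right hsb (by nlinarith)
    have hs2n : s^2*(n:ℝ)^2 = 4*((n:ℝ)-1)*(n:ℝ)^2 := by rw [hs2]; ring
    nlinarith [hk, hs2n, mul_nonneg (mul_nonneg (by linarith : (0:ℝ) ≤ (n:ℝ)-3) hn0.le) hn0.le, sq_nonneg ((n:ℝ)-3), mul_nonneg hs hn0.le]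



lemma hid_aux (c n s F dd ll : ℝ) (hn : (0:ℝ) < n) (hF : F = (ll + dd - 2 + s)/2) :
    (2*c/n) * ((s + 2*c/n) * ((F - dd) + 2*c/n))
      = (c/n^3) * (((s - (dd-ll) - 2)*n + 4*c) * (s*n + 2*c)) := by
  subst hF
  have hn' : n ≠ 0 := ne_of_gt hn
  field_simp
  ring

lemma hlc_aux (c n ll : ℝ) (hn : (0:ℝ) < n) : (c/n^3) * (ll*n^3) = ll*c := by
  have hn' : n ≠ 0 := ne_of_gt hn
  field_simp


set_option maxHeartbeats 1600000 in
/-- Let `H = K_l ∨ H₂` where `H₂` is a graph on `n − l` vertices with maximum degree at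
most `d` and at most `c` vertices of degree exactly `d`, where `d ≥ 1`, `l ≥ 1` and `n`
is large enough that `√(l(n−l)) > d`.  Then `λ(H) ≤ f(d−1, n) + 2c/n`. -/
theorem specRad_join_upper_bound {β : Type*} [Fintype β]
    (H₂ : SimpleGraph β) (l n d c : ℕ)
    (hβ : Fintype.card β = n - l) (hl : 1 ≤ l) (hln : l < n) (hd : 1 ≤ d)
    (hsqrt : (d : ℝ) < Real.sqrt ((l : ℝ) * ((n : ℝ) - l)))
    (hmax : ∀ v, H₂.degree v ≤ d)
    (hc : (Finset.univ.filter (fun v => H₂.degree v = d)).card ≤ c) :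
    specRad (graphJoin (⊤ : SimpleGraph (Fin l)) H₂) ≤
      fdn l ((d : ℝ) - 1) n + 2 * (c : ℝ) / n := by
  -- basic real facts
  have hl1 : (1:ℝ) ≤ l := by exact_mod_cast hl
  have hd1 : (1:ℝ) ≤ d := by exact_mod_cast hd
  have hn0 : (0:ℝ) < n := by exact_mod_cast (by omega : 0 < n)
  have hlen : (l:ℝ) ≤ n := by exact_mod_cast hln.le
  have hln1 : (l:ℝ) + 1 ≤ n := by exact_mod_cast hln
  -- L and s
  set L : ℝ := (l:ℝ) * ((n:ℝ) - (l:ℝ)) with hLdef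
  have hL0 : 0 < L := by
    have : (1:ℝ) ≤ (n:ℝ) - l := by linarith
    have h0l : (0:ℝ) < l := by linarith
    exact mul_pos h0l (by linarith)
  have harg : (0:ℝ) ≤ ((l:ℝ)-(d:ℝ))^2 + 4*L := by positivity
  set s : ℝ := Real.sqrt (((l:ℝ)-(d:ℝ))^2 + 4*L) with hsdef
  have hs0 : 0 ≤ s := Real.sqrt_nonneg _
  have hs2 : s^2 = ((l:ℝ)-(d:ℝ))^2 + 4*L := Real.sq_sqrt harg
  have hdL : (d:ℝ)^2 < L := by
    have := (Real.lt_sqrt (by positivity : (0:ℝ) ≤ (d:ℝ))).mp hsqrt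
    simpa [hLdef] using this
  have hLint : (d:ℝ)^2 + 1 ≤ L := by
    have h1 : d^2 < l * (n - l) := by
      have : ((d^2 : ℕ) : ℝ) < ((l * (n-l) : ℕ) : ℝ) := by
        push_cast [Nat.cast_sub hln.le]
        convert hdL using 2 <;> ring_nf
      exact_mod_cast this
    have h2 : d^2 + 1 ≤ l * (n - l) := h1
    have := (Nat.cast_le (α := ℝ)).mpr h2
    push_cast [Nat.cast_sub hln.le] at this
    calc (d:ℝ)^2 + 1 = ((d:ℝ)^2 + 1) := rfl
    _ ≤ (l:ℝ) * ((n:ℝ) - l) := by convert this using 2 <;> push_cast <;> ring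
    _ = L := rfl
  -- F facts
  set F : ℝ := fdn l ((d:ℝ)-1) n with hFdef
  have hFs : F = ((l:ℝ) + d - 2 + s)/2 := by
    rw [hFdef, fdn, hsdef]
    congr 2
    · ring
    · congr 1
      push_cast
      ring
  have hs2d : 2*(d:ℝ) ≤ s := by
    have : (2*(d:ℝ))^2 ≤ s^2 := by rw [hs2]; nlinarith [sq_nonneg ((l:ℝ)-(d:ℝ))]
    nlinarith
  have hsld : (l:ℝ) - d ≤ s := by
    have : ((l:ℝ)-d)^2 ≤ s^2 := by rw [hs2]; nlinarith
    rcases le_or_gt ((l:ℝ)-d) 0 with h | h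
    · linarith
    · nlinarith
  have hFd : (d:ℝ) ≤ F := by rw [hFs]; linarith
  have hFl1 : (l:ℝ) - 1 ≤ F := by rw [hFs]; linarith
  have hFid : (F - ((l:ℝ)-1)) * (F - ((d:ℝ)-1)) = L := by
    rw [hFs]
    linear_combination hs2 / 4
  have hF0 : (0:ℝ) < F := by linarith
  have hcn0 : (0:ℝ) ≤ 2*(c:ℝ)/n := by positivity
  -- reduce to eigenvalue bound
  rw [specRad]
  apply Real.sSup_le _ (by linarith)
  rintro μ hμ
  simp only [Set.mem_setOf_eq] at hμ
  by_contra hcon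
  push_neg at hcon
  have hμF : F + 2*(c:ℝ)/n < μ := hcon
  have hμ0 : 0 < μ := by linarith
  -- eigenvector
  obtain ⟨x, hx⟩ := hμ.exists_hasEigenvector
  have hxe := hx.apply_eq_smul
  simp only [Matrix.toLin'_apply] at hxe
  have hx0 : x ≠ 0 := hx.right
  set G := graphJoin (⊤ : SimpleGraph (Fin l)) H₂ with hGdef
  set y : (Fin l ⊕ β) → ℝ := fun v => |x v| with hydef
  have hy0 : ∀ v, 0 ≤ y v := fun v => abs_nonneg _
  have hy : ∀ v, μ * y v ≤ ∑ w, (if G.Adj v w then (1:ℝ) else 0) * y w := by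
    intro v
    have h1 : μ * x v = ∑ w, (if G.Adj v w then (1:ℝ) else 0) * x w := by
      have h2 := congrFun hxe v
      rw [Matrix.mulVec, dotProduct] at h2
      simp only [SimpleGraph.adjMatrix_apply, Pi.smul_apply, smul_eq_mul] at h2
      convert h2.symm using 2
    calc μ * y v = |μ * x v| := by
          rw [abs_mul, abs_of_nonneg hμ0.le]
    _ = |∑ w, (if G.Adj v w then (1:ℝ) else 0) * x w| := by rw [h1]
    _ ≤ ∑ w, |(if G.Adj v w then (1:ℝ) else 0) * x w| := Finset.abs_sum_le_sum_abs _ _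
    _ = ∑ w, (if G.Adj v w then (1:ℝ) else 0) * y w := by
        refine Finset.sum_congr rfl fun w _ => ?_
        rw [abs_mul]
        congr 1
        split <;> simp
  -- sums
  set S : ℝ := ∑ a : Fin l, y (Sum.inl a) with hSdef
  set T : ℝ := ∑ v : β, y (Sum.inr v) with hTdef
  have hβne : Nonempty β := by
    rw [← Fintype.card_pos_iff, hβ]; omega
  obtain ⟨v₀, -, hv₀⟩ := Finset.univ.exists_max_image (fun v => y (Sum.inr v)) ⟨Classical.arbitrary β, Finset.mem_univ _⟩
  set m : ℝ := y (Sum.inr v₀) with hmdef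
  have hym : ∀ v : β, y (Sum.inr v) ≤ m := fun v => hv₀ v (Finset.mem_univ v)
  have hS0 : 0 ≤ S := Finset.sum_nonneg fun a _ => hy0 _
  have hT0 : 0 ≤ T := Finset.sum_nonneg fun v _ => hy0 _
  have hm0 : 0 ≤ m := hy0 _
  -- adjacency facts
  have hadj_ll : ∀ a b : Fin l, G.Adj (Sum.inl a) (Sum.inl b) ↔ a ≠ b := by
    intro a b; rw [hGdef]; constructor
    · intro h; exact (SimpleGraph.top_adj a b).mp h
    · intro h; exact (SimpleGraph.top_adj a b).mpr h
  have hadj_lr : ∀ (a : Fin l) (v : β), G.Adj (Sum.inl a) (Sum.inr v) := by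
    intro a v; rw [hGdef]; trivial
  have hadj_rl : ∀ (v : β) (a : Fin l), G.Adj (Sum.inr v) (Sum.inl a) := by
    intro v a; rw [hGdef]; trivial
  have hadj_rr : ∀ u v : β, G.Adj (Sum.inr u) (Sum.inr v) ↔ H₂.Adj u v := by
    intro u v; rw [hGdef]; exact Iff.rfl
  -- row sums
  have rowsum_l : ∀ a : Fin l, ∑ w, (if G.Adj (Sum.inl a) w then (1:ℝ) else 0) * y w
      = (S - y (Sum.inl a)) + T := by
    intro a
    rw [Fintype.sum_sum_type]
    have h2 : ∑ v : β, (if G.Adj (Sum.inl a) (Sum.inr v) then (1:ℝ) else 0) * y (Sum.inr v) = T := by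
      refine Finset.sum_congr rfl fun v _ => ?_
      rw [if_pos (hadj_lr a v), one_mul]
    have h1 : ∑ b : Fin l, (if G.Adj (Sum.inl a) (Sum.inl b) then (1:ℝ) else 0) * y (Sum.inl b)
        = S - y (Sum.inl a) := by
      have hterm : ∀ b : Fin l, (if G.Adj (Sum.inl a) (Sum.inl b) then (1:ℝ) else 0) * y (Sum.inl b)
          = y (Sum.inl b) - (if a = b then y (Sum.inl b) else 0) := by
        intro b
        by_cases hab : a = b
        · subst hab
          rw [if_neg (by simp [hadj_ll]), if_pos rfl]; ring
        · rw [if_pos ((hadj_ll a b).mpr hab), if_neg hab]; ring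
      rw [Finset.sum_congr rfl (fun b _ => hterm b), Finset.sum_sub_distrib, Finset.sum_ite_eq]
      simp [hSdef]
    rw [h1, h2]
  have rowsum_r : ∀ v : β, ∑ w, (if G.Adj (Sum.inr v) w then (1:ℝ) else 0) * y w
      = S + ∑ u : β, (if H₂.Adj v u then (1:ℝ) else 0) * y (Sum.inr u) := by
    intro v
    rw [Fintype.sum_sum_type]
    have h1 : ∑ a : Fin l, (if G.Adj (Sum.inr v) (Sum.inl a) then (1:ℝ) else 0) * y (Sum.inl a) = S := by
      rw [hSdef]
      refine Finset.sum_congr rfl fun a _ => ?_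
      rw [if_pos (hadj_rl v a), one_mul]
    have h2 : ∑ u : β, (if G.Adj (Sum.inr v) (Sum.inr u) then (1:ℝ) else 0) * y (Sum.inr u)
        = ∑ u : β, (if H₂.Adj v u then (1:ℝ) else 0) * y (Sum.inr u) := by
      refine Finset.sum_congr rfl fun u _ => ?_
      congr 1
    rw [h1, h2]
  -- degree sums
  have hdegsum : ∀ w : β, ∑ u : β, (if H₂.Adj w u then (1:ℝ) else 0) = (H₂.degree w : ℝ) := by
    intro w
    rw [Finset.sum_boole]
    congr 1
    have : Finset.univ.filter (fun u => H₂.Adj w u) = H₂.neighborFinset w := by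
      ext u; simp
    rw [this]
    rfl
  -- inequality (1)
  have e1 : μ * S ≤ ((l:ℝ) - 1) * S + (l:ℝ) * T := by
    have step : ∀ a : Fin l, μ * y (Sum.inl a) ≤ (S - y (Sum.inl a)) + T := by
      intro a
      calc μ * y (Sum.inl a) ≤ ∑ w, (if G.Adj (Sum.inl a) w then (1:ℝ) else 0) * y w := hy _
      _ = (S - y (Sum.inl a)) + T := rowsum_l a
    calc μ * S = ∑ a : Fin l, μ * y (Sum.inl a) := by rw [hSdef, Finset.mul_sum]
    _ ≤ ∑ a : Fin l, ((S - y (Sum.inl a)) + T) := Finset.sum_le_sum fun a _ => step a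
    _ = (l:ℝ) * (S + T) - S := by
        rw [Finset.sum_add_distrib, Finset.sum_sub_distrib, Finset.sum_const, Finset.sum_const]
        simp [← hSdef, Finset.card_univ]
        ring
    _ = ((l:ℝ) - 1) * S + (l:ℝ) * T := by ring
  -- inequality (3)
  have e3 : μ * m ≤ S + (d:ℝ) * m := by
    have h1 : ∑ u : β, (if H₂.Adj v₀ u then (1:ℝ) else 0) * y (Sum.inr u)
        ≤ (H₂.degree v₀ : ℝ) * m := by
      calc ∑ u : β, (if H₂.Adj v₀ u then (1:ℝ) else 0) * y (Sum.inr u)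
          ≤ ∑ u : β, (if H₂.Adj v₀ u then (1:ℝ) else 0) * m := by
            refine Finset.sum_le_sum fun u _ => ?_
            refine mul_le_mul_of_nonneg_left (hym u) ?_
            split <;> norm_num
      _ = (H₂.degree v₀ : ℝ) * m := by rw [← Finset.sum_mul, hdegsum]
    have h2 : (H₂.degree v₀ : ℝ) * m ≤ (d:ℝ) * m := by
      refine mul_le_mul_of_nonneg_right ?_ hm0
      exact_mod_cast hmax v₀
    calc μ * m ≤ ∑ w, (if G.Adj (Sum.inr v₀) w then (1:ℝ) else 0) * y w := hy _
    _ = S + ∑ u : β, (if H₂.Adj v₀ u then (1:ℝ) else 0) * y (Sum.inr u) := rowsum_r v₀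
    _ ≤ S + (d:ℝ) * m := by linarith
  -- inequality (2)
  have e2 : μ * T ≤ ((n:ℝ) - l) * S + ((d:ℝ) - 1) * T + (c:ℝ) * m := by
    have hcardβ : ((Fintype.card β : ℕ) : ℝ) = (n:ℝ) - l := by
      rw [hβ, Nat.cast_sub hln.le]
    have swap : ∑ v : β, ∑ u : β, (if H₂.Adj v u then (1:ℝ) else 0) * y (Sum.inr u)
        = ∑ u : β, (H₂.degree u : ℝ) * y (Sum.inr u) := by
      rw [Finset.sum_comm]
      refine Finset.sum_congr rfl fun u _ => ?_
      rw [← Finset.sum_mul]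
      congr 1
      rw [← hdegsum u]
      refine Finset.sum_congr rfl fun v _ => ?_
      by_cases h : H₂.Adj u v
      · rw [if_pos h, if_pos (H₂.adj_symm h)]
      · rw [if_neg h, if_neg (fun hh => h (H₂.adj_symm hh))]
    have degbound : ∑ u : β, (H₂.degree u : ℝ) * y (Sum.inr u)
        ≤ ((d:ℝ) - 1) * T + (c:ℝ) * m := by
      have step : ∀ u : β, (H₂.degree u : ℝ) * y (Sum.inr u)
          ≤ ((d:ℝ) - 1) * y (Sum.inr u) + (if H₂.degree u = d then m else 0) := by
        intro u
        by_cases h : H₂.degree u = d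
        · rw [if_pos h, h]
          have := hym u
          linarith [hy0 (Sum.inr u)]
        · rw [if_neg h]
          have hle : H₂.degree u ≤ d - 1 := by
            have := hmax u
            omega
          have hle' : (H₂.degree u : ℝ) ≤ (d:ℝ) - 1 := by
            have h1 : ((H₂.degree u : ℕ) : ℝ) ≤ ((d - 1 : ℕ) : ℝ) := by exact_mod_cast hle
            rw [Nat.cast_sub hd] at h1
            simpa using h1
          nlinarith [hy0 (Sum.inr u)]
      calc ∑ u : β, (H₂.degree u : ℝ) * y (Sum.inr u)
          ≤ ∑ u : β, (((d:ℝ) - 1) * y (Sum.inr u) + (if H₂.degree u = d then m else 0)) :=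
            Finset.sum_le_sum fun u _ => step u
      _ = ((d:ℝ) - 1) * T + ∑ u : β, (if H₂.degree u = d then m else 0) := by
          rw [Finset.sum_add_distrib, ← Finset.mul_sum, ← hTdef]
      _ ≤ ((d:ℝ) - 1) * T + (c:ℝ) * m := by
          have : ∑ u : β, (if H₂.degree u = d then m else 0)
              = ((Finset.univ.filter (fun u => H₂.degree u = d)).card : ℝ) * m := by
            rw [Finset.sum_ite, Finset.sum_const, Finset.sum_const_zero, add_zero, nsmul_eq_mul]
          rw [this]
          have hcc : ((Finset.univ.filter (fun u => H₂.degree u = d)).card : ℝ) ≤ (c:ℝ) := by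
            exact_mod_cast hc
          nlinarith
    calc μ * T = ∑ v : β, μ * y (Sum.inr v) := by rw [hTdef, Finset.mul_sum]
    _ ≤ ∑ v : β, (S + ∑ u : β, (if H₂.Adj v u then (1:ℝ) else 0) * y (Sum.inr u)) := by
        refine Finset.sum_le_sum fun v _ => ?_
        calc μ * y (Sum.inr v) ≤ ∑ w, (if G.Adj (Sum.inr v) w then (1:ℝ) else 0) * y w := hy _
        _ = S + ∑ u : β, (if H₂.Adj v u then (1:ℝ) else 0) * y (Sum.inr u) := rowsum_r v
    _ = ((n:ℝ) - l) * S + ∑ v : β, ∑ u : β, (if H₂.Adj v u then (1:ℝ) else 0) * y (Sum.inr u) := by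
        rw [Finset.sum_add_distrib, Finset.sum_const, nsmul_eq_mul, Finset.card_univ, hcardβ]
    _ ≤ ((n:ℝ) - l) * S + (((d:ℝ) - 1) * T + (c:ℝ) * m) := by
        rw [swap]; linarith
    _ = ((n:ℝ) - l) * S + ((d:ℝ) - 1) * T + (c:ℝ) * m := by ring
  -- positivity
  have hc0 : (0:ℝ) ≤ c := Nat.cast_nonneg c
  have hμd : (d:ℝ) < μ := by linarith
  have hμl : (l:ℝ) - 1 < μ := by linarith
  have hSpos : 0 < S := by
    rcases hS0.lt_or_eq with h | h
    · exact h
    · exfalso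
      have hS : S = 0 := h.symm
      have hm : m ≤ 0 := by nlinarith [e3]
      have hmz : m = 0 := le_antisymm hm hm0
      have hyl : ∀ a : Fin l, y (Sum.inl a) = 0 := by
        have := (Finset.sum_eq_zero_iff_of_nonneg (fun a _ => hy0 (Sum.inl a))).mp (by rw [← hSdef]; exact hS)
        exact fun a => this a (Finset.mem_univ a)
      have hyr : ∀ v : β, y (Sum.inr v) = 0 := fun v => le_antisymm (hmz ▸ hym v) (hy0 _)
      apply hx0
      funext v
      show x v = 0
      have hyv : y v = 0 := by cases v with
        | inl a => exact hyl a
        | inr u => exact hyr u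
      exact abs_eq_zero.mp hyv
  have e1' : (μ - ((l:ℝ)-1)) * S ≤ (l:ℝ) * T := by nlinarith [e1]
  have hTpos : 0 < T := by
    nlinarith [mul_pos (by linarith : (0:ℝ) < μ - ((l:ℝ)-1)) hSpos, e1']
  -- cubic inequality
  have c2' : ((μ - ((d:ℝ)-1)) * (μ - d)) * T ≤ (((n:ℝ)-l) * (μ - d) + c) * S := by
    have h1 : (μ - ((d:ℝ)-1)) * T ≤ ((n:ℝ)-l)*S + (c:ℝ)*m := by nlinarith [e2]
    have h2 := mul_le_mul_of_nonneg_left h1 (by linarith : (0:ℝ) ≤ μ - d)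
    have h3 : (c:ℝ) * ((μ - d) * m) ≤ (c:ℝ) * S := by
      refine mul_le_mul_of_nonneg_left ?_ hc0
      nlinarith [e3]
    nlinarith [h2, h3]
  have hK0 : (0:ℝ) ≤ ((n:ℝ)-l)*(μ-d) + c := by
    have := mul_nonneg (by linarith : (0:ℝ) ≤ (n:ℝ)-l) (by linarith : (0:ℝ) ≤ μ - d)
    linarith
  have cub : (μ - ((l:ℝ)-1)) * ((μ - ((d:ℝ)-1)) * (μ - d)) ≤ (((n:ℝ)-l)*(μ-d) + c) * l := by
    have s1 := mul_le_mul_of_nonneg_left c2' (by linarith : (0:ℝ) ≤ μ - ((l:ℝ)-1))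
    have s2 := mul_le_mul_of_nonneg_left e1' hK0
    have s3 : (μ - ((l:ℝ)-1)) * ((((n:ℝ)-l) * (μ - d) + c) * S)
        = (((n:ℝ)-l)*(μ-d) + c) * ((μ - ((l:ℝ)-1)) * S) := by ring
    have s4 : (μ - ((l:ℝ)-1)) * (((μ - ((d:ℝ)-1)) * (μ - d)) * T) ≤ ((((n:ℝ)-l)*(μ-d) + c) * l) * T := by
      calc (μ - ((l:ℝ)-1)) * (((μ - ((d:ℝ)-1)) * (μ - d)) * T)
          ≤ (μ - ((l:ℝ)-1)) * ((((n:ℝ)-l) * (μ - d) + c) * S) := s1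
      _ = (((n:ℝ)-l)*(μ-d) + c) * ((μ - ((l:ℝ)-1)) * S) := s3
      _ ≤ (((n:ℝ)-l)*(μ-d) + c) * ((l:ℝ) * T) := s2
      _ = ((((n:ℝ)-l)*(μ-d) + c) * l) * T := by ring
    have s5 : ((μ - ((l:ℝ)-1)) * ((μ - ((d:ℝ)-1)) * (μ - d))) * T ≤ ((((n:ℝ)-l)*(μ-d) + c) * l) * T := by
      calc ((μ - ((l:ℝ)-1)) * ((μ - ((d:ℝ)-1)) * (μ - d))) * T
          = (μ - ((l:ℝ)-1)) * (((μ - ((d:ℝ)-1)) * (μ - d)) * T) := by ring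
      _ ≤ ((((n:ℝ)-l)*(μ-d) + c) * l) * T := s4
    exact le_of_mul_le_mul_right s5 hTpos
  -- compare with F
  have hQ : (μ - F) * ((μ + F - ((l:ℝ)+d-2)) * (μ - d)) ≤ (l:ℝ) * c := by
    have expand : (μ - ((l:ℝ)-1)) * ((μ - ((d:ℝ)-1)) * (μ - d)) - L*(μ-d)
        = (μ - F) * ((μ + F - ((l:ℝ)+d-2)) * (μ - d)) := by
      linear_combination (μ - d) * hFid
    have hKl : (((n:ℝ)-l)*(μ-d) + c) * l = L*(μ-d) + (l:ℝ)*c := by rw [hLdef]; ring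
    linarith [cub, expand]
  have h2F : 2*F - ((l:ℝ)+d-2) = s := by rw [hFs]; ring
  have t2 : 2*(c:ℝ)/n < μ - F := by linarith
  have t3 : s + 2*(c:ℝ)/n < μ + F - ((l:ℝ)+d-2) := by linarith
  have t4 : (F - d) + 2*(c:ℝ)/n < μ - d := by linarith
  have hFd2 : (0:ℝ) ≤ F - d := by linarith
  have lb : (2*(c:ℝ)/n) * ((s + 2*(c:ℝ)/n) * ((F - d) + 2*(c:ℝ)/n))
      < (μ - F) * ((μ + F - ((l:ℝ)+d-2)) * (μ - d)) := by
    have inner : (s + 2*(c:ℝ)/n) * ((F - d) + 2*(c:ℝ)/n) < (μ + F - ((l:ℝ)+d-2)) * (μ - d) :=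
      mul_lt_mul'' t3 t4 (by linarith) (by linarith)
    exact mul_lt_mul'' t2 inner hcn0 (mul_nonneg (by linarith) (by linarith))
  have ub : (l:ℝ) * c ≤ (2*(c:ℝ)/n) * ((s + 2*(c:ℝ)/n) * ((F - d) + 2*(c:ℝ)/n)) := by
    rcases Nat.eq_zero_or_pos c with hc' | hc'
    · subst hc'
      simp
    · have hc1 : (1:ℝ) ≤ c := by exact_mod_cast hc'
      have hkn := key l d n s hl hd (by omega) (by simpa [hLdef] using hLint) hs0
        (by rw [hs2, hLdef])
      have hsd2 : (0:ℝ) ≤ s - ((d:ℝ) - l) - 2 := by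
        have : F - d = (s - ((d:ℝ) - l) - 2)/2 := by rw [hFs]; ring
        linarith [hFd2, this]
      have mono : ((s - ((d:ℝ)-l) - 2)*n + 4) * (s*n + 2)
          ≤ ((s - ((d:ℝ)-l) - 2)*n + 4*c) * (s*n + 2*c) := by
        have hP : (0:ℝ) ≤ (s - ((d:ℝ)-l) - 2)*n := mul_nonneg hsd2 hn0.le
        have hQp : (0:ℝ) ≤ s*n := mul_nonneg hs0 hn0.le
        apply mul_le_mul (by linarith) (by linarith) (by linarith) (by linarith)
      have hbig : (l:ℝ)*n^3 ≤ ((s - ((d:ℝ)-l) - 2)*n + 4*c) * (s*n + 2*c) := le_trans hkn mono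
      have hcn3 : (0:ℝ) ≤ (c:ℝ)/(n:ℝ)^3 := by positivity
      have hmul := mul_le_mul_of_nonneg_left hbig hcn3
      have hid : (2*(c:ℝ)/n) * ((s + 2*(c:ℝ)/n) * ((F - d) + 2*(c:ℝ)/n))
          = ((c:ℝ)/(n:ℝ)^3) * (((s - ((d:ℝ)-l) - 2)*n + 4*c) * (s*n + 2*c)) :=
        hid_aux (c:ℝ) (n:ℝ) s F (d:ℝ) (l:ℝ) hn0 hFs
      have hlc : ((c:ℝ)/(n:ℝ)^3) * ((l:ℝ)*n^3) = (l:ℝ)*c := hlc_aux (c:ℝ) (n:ℝ) (l:ℝ) hn0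
      rw [hid]
      calc (l:ℝ)*c = ((c:ℝ)/(n:ℝ)^3) * ((l:ℝ)*n^3) := hlc.symm
      _ ≤ ((c:ℝ)/(n:ℝ)^3) * (((s - ((d:ℝ)-l) - 2)*n + 4*c) * (s*n + 2*c)) := hmul
  linarith [hQ, lb, ub]
end
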